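/- arXiv:2206.07590 — 7 statements merged into one kernel-verified Lean document; each statement's English description precedes it below -/
import Mathlib

section
/- For every integer n ≥ 0 and every x, Q_{2n}(x) = (-1)^n + Σ_{k=0}^{n-1} C(2n, 2k+1) (-1)^k P_{2n-2k-1}(x), where C(m,j) denotes the binomial coefficient. -/
open Polynomial Finset

/-- The derivative polynomials for tangent: `P 0 = X`,
`P (n+1) = (1 + X^2) * (P n)'`. -/
noncomputable def P : ℕ → Polynomial ℚ
  | 0 => X
  | n + 1 => (1 + X ^ 2) * derivative (P n)

/-- The derivative polynomials for secant: `Q 0 = 1`,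
`Q (n+1) = (1 + X^2) * (Q n)' + X * Q n`. -/
noncomputable def Q : ℕ → Polynomial ℚ
  | 0 => 1
  | n + 1 => (1 + X ^ 2) * derivative (Q n) + X * Q n

def cc : ℕ → ℚ
  | 0 => 1
  | 1 => 0
  | n + 2 => -cc n

def ss (n : ℕ) : ℚ := -cc (n + 1)

lemma ss_zero : ss 0 = 0 := by simp [ss, cc]

lemma ss_succ (n : ℕ) : ss (n + 1) = cc n := by simp [ss, cc]

lemma cc_succ (n : ℕ) : cc (n + 1) = -ss n := by simp [ss]

lemma cc_even (n : ℕ) : cc (2 * n) = (-1) ^ n := by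
  induction n with
  | zero => rfl
  | succ k ih =>
      have h : 2 * (k + 1) = 2 * k + 2 := by ring
      rw [h, show cc (2 * k + 2) = -cc (2 * k) from rfl, ih]
      ring

lemma cc_odd (n : ℕ) : cc (2 * n + 1) = 0 := by
  induction n with
  | zero => rfl
  | succ k ih =>
      have h : 2 * (k + 1) + 1 = (2 * k + 1) + 2 := by ring
      rw [h, show cc ((2 * k + 1) + 2) = -cc (2 * k + 1) from rfl, ih]
      ring

lemma ss_even (n : ℕ) : ss (2 * n) = 0 := by
  rw [ss]; exact neg_eq_zero.mpr (cc_odd n)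

lemma ss_odd (k : ℕ) : ss (2 * k + 1) = (-1) ^ k := by
  rw [ss_succ, cc_even]

lemma Dsum (a : ℕ → ℚ) (n : ℕ) :
    (1 + X ^ 2) * derivative (∑ j ∈ range (n + 1), C (a j) * P (n - j))
      = ∑ j ∈ range (n + 1), C (a j) * P (n + 1 - j) := by
  rw [derivative_sum, Finset.mul_sum]
  refine Finset.sum_congr rfl fun j hj => ?_
  have hj' : j ≤ n := Nat.lt_succ_iff.mp (Finset.mem_range.mp hj)
  have h1 : n + 1 - j = (n - j) + 1 := by omega
  rw [h1, derivative_C_mul, show P ((n - j) + 1) = (1 + X ^ 2) * derivative (P (n - j)) from rfl]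
  ring

lemma AB (n : ℕ) :
    Q n = C (cc n) + ∑ j ∈ range (n + 1), C ((n.choose j : ℚ) * ss j) * P (n - j) ∧
    (∑ j ∈ range (n + 1), C ((n.choose j : ℚ) * cc j) * P (n - j)) = C (ss n) + X * Q n := by
  induction n with
  | zero =>
      constructor
      · simp [Q, ss_zero, cc]
      · simp [Q, ss_zero, cc, P]
  | succ n ih =>
      obtain ⟨hA, hB⟩ := ih
      have hDQ : ∑ j ∈ range (n + 1), C ((n.choose j : ℚ) * ss j) * P (n + 1 - j)
          = (1 + X ^ 2) * derivative (Q n) := by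
        rw [hA, derivative_add, derivative_C, zero_add]
        exact (Dsum (fun j => (n.choose j : ℚ) * ss j) n).symm
      have hDB : ∑ j ∈ range (n + 1), C ((n.choose j : ℚ) * cc j) * P (n + 1 - j)
          = (1 + X ^ 2) * (Q n + X * derivative (Q n)) := by
        rw [show Q n + X * derivative (Q n) = derivative (C (ss n) + X * Q n) by
              rw [derivative_add, derivative_C, zero_add, derivative_mul, derivative_X, one_mul],
            ← hB]
        exact (Dsum (fun j => (n.choose j : ℚ) * cc j) n).symm
      have split : ∀ g : ℕ → ℚ,
          (∑ j ∈ range (n + 2), C (((n + 1).choose j : ℚ) * g j) * P (n + 1 - j))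
            = ((∑ i ∈ range (n + 1), C ((n.choose i : ℚ) * g (i + 1)) * P (n - i))
                + ∑ i ∈ range (n + 1), C ((n.choose (i + 1) : ℚ) * g (i + 1)) * P (n - i))
              + C (g 0) * P (n + 1) := by
        intro g
        rw [Finset.sum_range_succ']
        congr 1
        · rw [← Finset.sum_add_distrib]
          refine Finset.sum_congr rfl fun i hi => ?_
          have hij : n + 1 - (i + 1) = n - i := by omega
          rw [hij, Nat.choose_succ_succ]
          push_cast
          rw [add_mul, map_add, add_mul]
        · norm_num
      have shift : ∀ g : ℕ → ℚ,
          (∑ i ∈ range (n + 1), C ((n.choose (i + 1) : ℚ) * g (i + 1)) * P (n - i))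
              + C (g 0) * P (n + 1)
            = ∑ j ∈ range (n + 1), C ((n.choose j : ℚ) * g j) * P (n + 1 - j) := by
        intro g
        rw [Finset.sum_range_succ' (fun j => C ((n.choose j : ℚ) * g j) * P (n + 1 - j)) n]
        congr 1
        · rw [Finset.sum_range_succ]
          simp only [Nat.choose_succ_self, Nat.cast_zero, zero_mul, map_zero, add_zero]
          refine Finset.sum_congr rfl fun i hi => ?_
          have hij : n + 1 - (i + 1) = n - i := by omega
          rw [hij]
        · norm_num
      have hS1 : (∑ i ∈ range (n + 1), C ((n.choose i : ℚ) * ss (i + 1)) * P (n - i))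
          = C (ss n) + X * Q n := by
        rw [← hB]
        exact Finset.sum_congr rfl fun i _ => by rw [ss_succ]
      have h1 : (∑ i ∈ range (n + 1), C ((n.choose i : ℚ) * cc (i + 1)) * P (n - i))
          = C (cc n) - Q n := by
        have hAs : (∑ j ∈ range (n + 1), C ((n.choose j : ℚ) * ss j) * P (n - j))
            = Q n - C (cc n) := by rw [hA]; ring
        calc (∑ i ∈ range (n + 1), C ((n.choose i : ℚ) * cc (i + 1)) * P (n - i))
            = ∑ i ∈ range (n + 1), -(C ((n.choose i : ℚ) * ss i) * P (n - i)) := by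
              refine Finset.sum_congr rfl fun i _ => ?_
              rw [cc_succ, mul_neg, map_neg, neg_mul]
          _ = -(Q n - C (cc n)) := by rw [Finset.sum_neg_distrib, hAs]
          _ = C (cc n) - Q n := by ring
      constructor
      · rw [show Q (n + 1) = (1 + X ^ 2) * derivative (Q n) + X * Q n from rfl,
            cc_succ, map_neg]
        linear_combination -(split ss) - shift ss - hDQ - hS1
      · rw [show Q (n + 1) = (1 + X ^ 2) * derivative (Q n) + X * Q n from rfl, ss_succ]
        linear_combination split cc + shift cc + hDB + h1

lemma sum_odd (f : ℕ → ℚ) (hf : ∀ k, f (2 * k) = 0) (n : ℕ) :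
    ∑ j ∈ range (2 * n + 1), f j = ∑ k ∈ range n, f (2 * k + 1) := by
  induction n with
  | zero => simpa using hf 0
  | succ m ih =>
      have h1 : 2 * (m + 1) + 1 = ((2 * m + 1) + 1) + 1 := by ring
      rw [h1, Finset.sum_range_succ, Finset.sum_range_succ, ih, Finset.sum_range_succ]
      have h2 : (2 * m + 1) + 1 = 2 * (m + 1) := by ring
      rw [h2, hf (m + 1)]
      ring

theorem Q_even_eq_sum_P (n : ℕ) (x : ℚ) :
    (Q (2 * n)).eval x =
      (-1) ^ n + ∑ k ∈ Finset.range n,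
        ((2 * n).choose (2 * k + 1) : ℚ) * (-1) ^ k * (P (2 * n - 2 * k - 1)).eval x := by
  have hA := (AB (2 * n)).1
  have := congrArg (eval x) hA
  rw [eval_add, eval_C, eval_finset_sum, cc_even] at this
  rw [this]
  congr 1
  simp only [eval_mul, eval_C]
  rw [sum_odd (fun j => (((2 * n).choose j : ℚ) * ss j) * (P (2 * n - j)).eval x)
      (fun k => by simp [ss_even])]
  refine Finset.sum_congr rfl fun k hk => ?_
  rw [ss_odd]
  have : 2 * n - (2 * k + 1) = 2 * n - 2 * k - 1 := by omega
  rw [this]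
end

section
/- For every integer n ≥ 0 and every x, Q_{2n+1}(x) = Σ_{k=0}^{n} C(2n+1, 2k+1) (-1)^k P_{2n-2k}(x), where C(m,j) denotes the binomial coefficient. -/
open Polynomial Finset

/-- Taylor coefficients of `sin`. -/
def sF (j : ℕ) : ℚ := if j % 2 = 1 then (-1) ^ (j / 2) else 0

/-- Taylor coefficients of `cos`. -/
def cF (j : ℕ) : ℚ := if j % 2 = 0 then (-1) ^ (j / 2) else 0

lemma sF_succ (j : ℕ) : sF (j + 1) = cF j := by
  rcases Nat.mod_two_eq_zero_or_one j with h | h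
  · have h1 : (j + 1) % 2 = 1 := by omega
    have h2 : (j + 1) / 2 = j / 2 := by omega
    simp [sF, cF, h, h1, h2]
  · have h1 : (j + 1) % 2 = 0 := by omega
    simp [sF, cF, h, h1]

lemma cF_succ (j : ℕ) : cF (j + 1) = -sF j := by
  rcases Nat.mod_two_eq_zero_or_one j with h | h
  · have h1 : (j + 1) % 2 = 1 := by omega
    simp [sF, cF, h, h1]
  · have h1 : (j + 1) % 2 = 0 := by omega
    have h2 : (j + 1) / 2 = j / 2 + 1 := by omega
    simp [sF, cF, h, h1, h2, pow_succ]

/-- Binomial convolution of a coefficient sequence with `P`. -/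
noncomputable def Conv (a : ℕ → ℚ) (m : ℕ) : Polynomial ℚ :=
  ∑ j ∈ range (m + 1), Polynomial.C ((m.choose j : ℚ) * a j) * P (m - j)

lemma Conv_succ (a : ℕ → ℚ) (m : ℕ) :
    Conv a (m + 1) =
      (1 + X ^ 2) * derivative (Conv a m) + Conv (fun j => a (j + 1)) m := by
  have hD : (1 + X ^ 2) * derivative (Conv a m)
      = ∑ j ∈ range (m + 1), Polynomial.C ((m.choose j : ℚ) * a j) * P (m + 1 - j) := by
    unfold Conv
    rw [derivative_sum, Finset.mul_sum]
    refine Finset.sum_congr rfl fun j hj => ?_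
    have hj' : j ≤ m := Nat.lt_succ_iff.mp (Finset.mem_range.mp hj)
    have h1 : m + 1 - j = (m - j) + 1 := by omega
    rw [h1, derivative_C_mul]
    show (1 + X ^ 2) * (Polynomial.C ((m.choose j : ℚ) * a j) * derivative (P (m - j)))
      = Polynomial.C ((m.choose j : ℚ) * a j) * ((1 + X ^ 2) * derivative (P (m - j)))
    ring
  have hshift : ∑ j ∈ range (m + 1), Polynomial.C ((m.choose j : ℚ) * a j) * P (m + 1 - j)
      = (∑ j ∈ range (m + 1),
            Polynomial.C ((m.choose (j + 1) : ℚ) * a (j + 1)) * P (m - j))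
          + Polynomial.C (a 0) * P (m + 1) := by
    have hext : ∑ j ∈ range (m + 1), Polynomial.C ((m.choose j : ℚ) * a j) * P (m + 1 - j)
        = ∑ j ∈ range (m + 2), Polynomial.C ((m.choose j : ℚ) * a j) * P (m + 1 - j) := by
      conv_rhs => rw [Finset.sum_range_succ]
      simp [Nat.choose_succ_self]
    rw [hext, Finset.sum_range_succ']
    congr 1
    · refine Finset.sum_congr rfl fun j hj => ?_
      have h : m + 1 - (j + 1) = m - j := by omega
      rw [h]
    · simp
  have hL : Conv a (m + 1)
      = (∑ j ∈ range (m + 1),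
            Polynomial.C (((m + 1).choose (j + 1) : ℚ) * a (j + 1)) * P (m + 1 - (j + 1)))
          + Polynomial.C (((m + 1).choose 0 : ℚ) * a 0) * P (m + 1 - 0) := by
    unfold Conv
    rw [Finset.sum_range_succ']
  have hB : Conv (fun j => a (j + 1)) m
      = ∑ j ∈ range (m + 1), Polynomial.C ((m.choose j : ℚ) * a (j + 1)) * P (m - j) := rfl
  have hpascal : ∀ j : ℕ,
      (((m + 1).choose (j + 1) : ℚ)) = (m.choose j : ℚ) + (m.choose (j + 1) : ℚ) := by
    intro j
    rw [Nat.choose_succ_succ]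
    push_cast
    ring
  have h1 : ∑ j ∈ range (m + 1),
        Polynomial.C (((m + 1).choose (j + 1) : ℚ) * a (j + 1)) * P (m + 1 - (j + 1))
      = (∑ j ∈ range (m + 1),
            Polynomial.C ((m.choose (j + 1) : ℚ) * a (j + 1)) * P (m - j))
        + ∑ j ∈ range (m + 1),
            Polynomial.C ((m.choose j : ℚ) * a (j + 1)) * P (m - j) := by
    rw [← Finset.sum_add_distrib]
    refine Finset.sum_congr rfl fun j hj => ?_
    have h2 : m + 1 - (j + 1) = m - j := by omega
    rw [h2, hpascal, add_mul, map_add, add_mul]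
    ring
  have h2 : Polynomial.C (((m + 1).choose 0 : ℚ) * a 0) * P (m + 1 - 0)
      = Polynomial.C (a 0) * P (m + 1) := by
    simp
  rw [hL, h1, h2, hB, hD.trans hshift]
  ring

lemma Conv_sF_succ (m : ℕ) :
    Conv sF (m + 1) = (1 + X ^ 2) * derivative (Conv sF m) + Conv cF m := by
  rw [Conv_succ, show (fun j => sF (j + 1)) = cF from funext sF_succ]

lemma Conv_cF_succ (m : ℕ) :
    Conv cF (m + 1) = (1 + X ^ 2) * derivative (Conv cF m) - Conv sF m := by
  rw [Conv_succ, show (fun j => cF (j + 1)) = fun j => -sF j from funext cF_succ]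
  have h : Conv (fun j => -sF j) m = -Conv sF m := by
    unfold Conv
    rw [← Finset.sum_neg_distrib]
    refine Finset.sum_congr rfl fun j _ => ?_
    simp [mul_neg, neg_mul]
  rw [h]
  ring

lemma key (n : ℕ) :
    Conv sF (2 * n) = Q (2 * n) - Polynomial.C ((-1) ^ n)
      ∧ Conv cF (2 * n) = X * Q (2 * n) := by
  have hQ : ∀ m, Q (m + 1) = (1 + X ^ 2) * derivative (Q m) + X * Q m := fun _ => rfl
  induction n with
  | zero =>
      constructor
      · show Conv sF 0 = Q 0 - Polynomial.C ((-1 : ℚ) ^ 0)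
        unfold Conv
        simp [sF, Q]
      · show Conv cF 0 = X * Q 0
        unfold Conv
        simp [cF, Q, P]
  | succ n ih =>
      obtain ⟨hR, hC⟩ := ih
      have hRo : Conv sF (2 * n + 1) = Q (2 * n + 1) := by
        rw [Conv_sF_succ, hR, hC, hQ (2 * n), derivative_sub, derivative_C]
        ring
      have hCo : Conv cF (2 * n + 1) = X * Q (2 * n + 1) + Polynomial.C ((-1) ^ n) := by
        rw [Conv_cF_succ, hC, hR, hQ (2 * n), derivative_mul, derivative_X]
        ring
      have e2 : 2 * (n + 1) = (2 * n + 1) + 1 := by ring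
      have hpow : Polynomial.C ((-1 : ℚ) ^ (n + 1)) = -Polynomial.C ((-1 : ℚ) ^ n) := by
        rw [pow_succ]
        simp
      constructor
      · rw [e2, Conv_sF_succ, hRo, hCo, hQ (2 * n + 1), hpow]
        ring
      · rw [e2, Conv_cF_succ, hCo, hRo, hQ (2 * n + 1), derivative_add, derivative_C,
          derivative_mul, derivative_X]
        ring

lemma sum_pair (f : ℕ → ℚ) (n : ℕ) :
    ∑ j ∈ range (2 * n + 2), f j = ∑ k ∈ range (n + 1), (f (2 * k) + f (2 * k + 1)) := by
  induction n with
  | zero => simp [Finset.sum_range_succ]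
  | succ n ih =>
      rw [show 2 * (n + 1) + 2 = (2 * n + 2) + 1 + 1 by ring, Finset.sum_range_succ,
        Finset.sum_range_succ, ih]
      conv_rhs => rw [Finset.sum_range_succ]
      simp only [show 2 * (n + 1) = 2 * n + 2 by ring, show 2 * (n + 1) + 1 = 2 * n + 3 by ring,
        show 2 * n + 2 + 1 = 2 * n + 3 by ring]
      ring

theorem Q_odd_eq_sum_P (n : ℕ) (x : ℚ) :
    (Q (2 * n + 1)).eval x =
      ∑ k ∈ Finset.range (n + 1),
        ((2 * n + 1).choose (2 * k + 1) : ℚ) * (-1) ^ k * (P (2 * n - 2 * k)).eval x := by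
  have hQ : ∀ m, Q (m + 1) = (1 + X ^ 2) * derivative (Q m) + X * Q m := fun _ => rfl
  have hRo : Conv sF (2 * n + 1) = Q (2 * n + 1) := by
    obtain ⟨hR, hC⟩ := key n
    rw [Conv_sF_succ, hR, hC, hQ (2 * n), derivative_sub, derivative_C]
    ring
  rw [← hRo]
  unfold Conv
  rw [show 2 * n + 1 + 1 = 2 * n + 2 by ring, eval_finset_sum, sum_pair]
  refine Finset.sum_congr rfl fun k hk => ?_
  have hs0 : sF (2 * k) = 0 := by simp [sF, Nat.mul_mod_right]
  have hs1 : sF (2 * k + 1) = (-1) ^ k := by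
    have h1 : (2 * k + 1) % 2 = 1 := by omega
    have h2 : (2 * k + 1) / 2 = k := by omega
    simp [sF, h1, h2]
  have hsub : 2 * n + 1 - (2 * k + 1) = 2 * n - 2 * k := by omega
  rw [hsub]
  simp [hs0, hs1]
  try ring
end

section
/- For every integer m ≥ 0 and every x, Σ_{k=0}^{m} C(2m, 2k) (-1)^k P_{2m-2k}(x) − x · Σ_{k=0}^{m-1} C(2m, 2k+1) (-1)^k P_{2m-2k-1}(x) = (-1)^m · x, where C(m,j) denotes the binomial coefficient. -/
open Polynomial Finset

/-- Complex version of `P`. -/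
noncomputable def PC (n : ℕ) : Polynomial ℂ := (P n).map (algebraMap ℚ ℂ)

/-- Complex version of `Q`. -/
noncomputable def QC (n : ℕ) : Polynomial ℂ := (Q n).map (algebraMap ℚ ℂ)

lemma PC_zero : PC 0 = X := by simp [PC, P]

lemma PC_succ (n : ℕ) : PC (n + 1) = (1 + X ^ 2) * derivative (PC n) := by
  simp [PC, P, Polynomial.derivative_map, Polynomial.map_mul, Polynomial.map_add,
    Polynomial.map_pow]

lemma QC_zero : QC 0 = 1 := by simp [QC, Q]

lemma QC_succ (n : ℕ) : QC (n + 1) = (1 + X ^ 2) * derivative (QC n) + X * QC n := by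
  simp [QC, Q, Polynomial.derivative_map, Polynomial.map_mul, Polynomial.map_add,
    Polynomial.map_pow]

lemma PC_eval (k : ℕ) (x : ℚ) : (PC k).eval (x : ℂ) = (((P k).eval x : ℚ) : ℂ) := by
  have hx : ((x : ℂ)) = algebraMap ℚ ℂ x := by norm_cast
  rw [PC, hx, Polynomial.eval_map, Polynomial.eval₂_at_apply]
  norm_cast

lemma QC_eval (k : ℕ) (x : ℚ) : (QC k).eval (x : ℂ) = (((Q k).eval x : ℚ) : ℂ) := by
  have hx : ((x : ℂ)) = algebraMap ℚ ℂ x := by norm_cast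
  rw [QC, hx, Polynomial.eval_map, Polynomial.eval₂_at_apply]
  norm_cast

/-- The key complex sum `∑ C(n,j) I^j P_{n-j}`. -/
noncomputable def S (n : ℕ) : Polynomial ℂ :=
  ∑ j ∈ Finset.range (n + 1), C ((n.choose j : ℂ) * Complex.I ^ j) * PC (n - j)

lemma S_succ (n : ℕ) :
    S (n + 1) = (1 + X ^ 2) * derivative (S n) + C Complex.I * S n := by
  have hL : S (n + 1) = (∑ j ∈ range (n + 1),
      C (((n.choose j : ℂ) + (n.choose (j + 1) : ℂ)) * Complex.I ^ (j + 1)) * PC (n - j))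
      + PC (n + 1) := by
    rw [S, Finset.sum_range_succ']
    congr 1
    · apply Finset.sum_congr rfl
      intro j hj
      have h2 : n + 1 - (j + 1) = n - j := by omega
      rw [h2, Nat.choose_succ_succ]
      push_cast
      congr 2
      try ring
    · simp
  have hR1 : (1 + X ^ 2) * derivative (S n)
      = ∑ j ∈ range (n + 1), C ((n.choose j : ℂ) * Complex.I ^ j) * PC (n - j + 1) := by
    rw [S, derivative_sum, Finset.mul_sum]
    apply Finset.sum_congr rfl
    intro j hj
    rw [PC_succ]
    simp only [derivative_mul, derivative_C]
    ring
  have hR1' : (1 + X ^ 2) * derivative (S n)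
      = (∑ j ∈ range n, C ((n.choose (j + 1) : ℂ) * Complex.I ^ (j + 1)) * PC (n - j))
        + PC (n + 1) := by
    rw [hR1, Finset.sum_range_succ']
    congr 1
    · apply Finset.sum_congr rfl
      intro j hj
      have hjn : j < n := Finset.mem_range.mp hj
      have h3 : n - (j + 1) + 1 = n - j := by omega
      rw [h3]
    · simp
  have hR2 : C Complex.I * S n
      = ∑ j ∈ range (n + 1), C ((n.choose j : ℂ) * Complex.I ^ (j + 1)) * PC (n - j) := by
    rw [S, Finset.mul_sum]
    apply Finset.sum_congr rfl
    intro j hj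
    rw [← mul_assoc, ← C_mul]
    congr 2
    ring
  have hsplit : ∑ j ∈ range (n + 1),
      C (((n.choose j : ℂ) + (n.choose (j + 1) : ℂ)) * Complex.I ^ (j + 1)) * PC (n - j)
      = (∑ j ∈ range (n + 1), C ((n.choose j : ℂ) * Complex.I ^ (j + 1)) * PC (n - j))
        + ∑ j ∈ range (n + 1), C ((n.choose (j + 1) : ℂ) * Complex.I ^ (j + 1)) * PC (n - j) := by
    rw [← Finset.sum_add_distrib]
    apply Finset.sum_congr rfl
    intro j hj
    rw [add_mul, map_add, add_mul]
  have hlast : ∑ j ∈ range (n + 1), C ((n.choose (j + 1) : ℂ) * Complex.I ^ (j + 1)) * PC (n - j)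
      = ∑ j ∈ range n, C ((n.choose (j + 1) : ℂ) * Complex.I ^ (j + 1)) * PC (n - j) := by
    rw [Finset.sum_range_succ]
    simp
  rw [hL, hsplit, hlast, hR1', hR2]
  ring

lemma S_eq (n : ℕ) :
    S n = C (-(Complex.I ^ (n + 1))) + (C Complex.I + X) * QC n := by
  induction n with
  | zero =>
      rw [S]
      simp [PC_zero, QC_zero]
  | succ n ih =>
      have hI : (C Complex.I : Polynomial ℂ) ^ 2 = -1 := by
        rw [← map_pow, Complex.I_sq]; simp
      rw [S_succ, ih, QC_succ]
      simp only [derivative_add, derivative_mul, derivative_C, derivative_X]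
      simp only [map_neg, map_pow]
      linear_combination QC n * hI

lemma sum_range_even_odd {M : Type*} [AddCommMonoid M] (g : ℕ → M) (m : ℕ) :
    ∑ j ∈ Finset.range (2 * m + 1), g j
      = (∑ k ∈ Finset.range (m + 1), g (2 * k)) + ∑ k ∈ Finset.range m, g (2 * k + 1) := by
  induction m with
  | zero => simp
  | succ m ih =>
      have h1 : 2 * (m + 1) + 1 = (2 * m + 1) + 1 + 1 := by ring
      rw [h1, Finset.sum_range_succ, Finset.sum_range_succ, ih,
        Finset.sum_range_succ (fun k => g (2 * k)) (m + 1),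
        Finset.sum_range_succ (fun k => g (2 * k + 1)) m]
      have h2 : 2 * m + 1 + 1 = 2 * (m + 1) := by ring
      rw [h2]
      abel

lemma rat_complex_eq {a b c d : ℚ}
    (h : (a : ℂ) + Complex.I * b = (c : ℂ) + Complex.I * d) : a = c ∧ b = d := by
  have h1 := congrArg Complex.re h
  have h2 := congrArg Complex.im h
  simp [Complex.add_re, Complex.add_im, Complex.mul_re, Complex.mul_im] at h1 h2
  exact ⟨by exact_mod_cast h1, by exact_mod_cast h2⟩

theorem P_even_alternating_identity (m : ℕ) (x : ℚ) :
    (∑ k ∈ Finset.range (m + 1),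
        ((2 * m).choose (2 * k) : ℚ) * (-1) ^ k * (P (2 * m - 2 * k)).eval x) -
      x * ∑ k ∈ Finset.range m,
        ((2 * m).choose (2 * k + 1) : ℚ) * (-1) ^ k * (P (2 * m - 2 * k - 1)).eval x =
    (-1) ^ m * x := by
  set A : ℚ := ∑ k ∈ Finset.range (m + 1),
      ((2 * m).choose (2 * k) : ℚ) * (-1) ^ k * (P (2 * m - 2 * k)).eval x with hA
  set B : ℚ := ∑ k ∈ Finset.range m,
      ((2 * m).choose (2 * k + 1) : ℚ) * (-1) ^ k * (P (2 * m - 2 * k - 1)).eval x with hB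
  set q : ℚ := (Q (2 * m)).eval x with hq
  have key := congrArg (Polynomial.eval (x : ℂ)) (S_eq (2 * m))
  rw [S] at key
  simp only [eval_finset_sum, eval_mul, eval_C, eval_add, eval_X, PC_eval, QC_eval] at key
  rw [sum_range_even_odd
    (fun j => ((2 * m).choose j : ℂ) * Complex.I ^ j * (((P (2 * m - j)).eval x : ℚ) : ℂ)) m]
      at key
  have he : ∑ k ∈ Finset.range (m + 1),
      ((2 * m).choose (2 * k) : ℂ) * Complex.I ^ (2 * k) * (((P (2 * m - 2 * k)).eval x : ℚ) : ℂ)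
      = (A : ℂ) := by
    rw [hA]
    push_cast
    apply Finset.sum_congr rfl
    intro k _
    rw [pow_mul, Complex.I_sq]
  have ho : ∑ k ∈ Finset.range m,
      ((2 * m).choose (2 * k + 1) : ℂ) * Complex.I ^ (2 * k + 1)
        * (((P (2 * m - (2 * k + 1))).eval x : ℚ) : ℂ)
      = Complex.I * (B : ℂ) := by
    rw [hB]
    push_cast
    rw [Finset.mul_sum]
    apply Finset.sum_congr rfl
    intro k _
    have : 2 * m - (2 * k + 1) = 2 * m - 2 * k - 1 := by omega
    rw [this, pow_succ, pow_mul, Complex.I_sq]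
    ring
  rw [he, ho] at key
  have hrhs : -Complex.I ^ (2 * m + 1) + (Complex.I + (x : ℂ)) * (q : ℂ)
      = ((x * q : ℚ) : ℂ) + Complex.I * ((q - (-1) ^ m : ℚ) : ℂ) := by
    rw [pow_succ, pow_mul, Complex.I_sq]
    push_cast
    ring
  rw [hrhs] at key
  obtain ⟨h1, h2⟩ := rat_complex_eq key
  rw [h1, h2]
  ring
end

section
/- For every integer m ≥ 0, Σ_{k=0}^{m} C(2m+1, 2k) (-1)^k E_{2m-2k+1} = (-1)^m, where C(m,j) denotes the binomial coefficient. -/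
open Polynomial Finset

/-- The Euler numbers: `E (2j) = Q (2j) (0)` (secant numbers) and
`E (2j+1) = P (2j+1) (0)` (tangent numbers). -/
noncomputable def E (n : ℕ) : ℚ := if Even n then (Q n).eval 0 else (P n).eval 0

noncomputable def Ee (p : Polynomial ℚ) : Polynomial ℚ := (1 + X ^ 2) * derivative p - X * p

lemma Ee_add (p q : Polynomial ℚ) : Ee (p + q) = Ee p + Ee q := by simp [Ee]; ring
lemma Ee_C_mul (a : ℚ) (p : Polynomial ℚ) : Ee (C a * p) = C a * Ee p := by simp [Ee]; ring
lemma Ee_P_mul (j : ℕ) (q : Polynomial ℚ) : Ee (P j * q) = P (j + 1) * q + P j * Ee q := by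
  simp [Ee, P, derivative_mul]; ring

lemma Ee_sum (s : Finset ℕ) (f : ℕ → Polynomial ℚ) :
    Ee (∑ j ∈ s, f j) = ∑ j ∈ s, Ee (f j) := by
  induction s using Finset.cons_induction with
  | empty => simp [Ee]
  | cons a s ha ih => rw [Finset.sum_cons, Ee_add, ih, Finset.sum_cons]

lemma key_s4 (n : ℕ) : Ee^[n] X =
    ∑ j ∈ Finset.range (n + 1), C ((n.choose j : ℚ)) * (P j * Ee^[n - j] 1) := by
  induction n with
  | zero => simp [P]
  | succ n ih =>
    rw [Function.iterate_succ_apply', ih, Ee_sum]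
    have hterm : ∀ j ∈ Finset.range (n + 1),
        Ee (C ((n.choose j : ℚ)) * (P j * Ee^[n - j] 1)) =
        C ((n.choose j : ℚ)) * (P (j + 1) * Ee^[n - j] 1) +
        C ((n.choose j : ℚ)) * (P j * Ee^[n + 1 - j] 1) := by
      intro j hj
      have hj' : j ≤ n := Nat.lt_succ_iff.mp (Finset.mem_range.mp hj)
      have hs : n + 1 - j = (n - j) + 1 := by omega
      rw [Ee_C_mul, Ee_P_mul, hs, Function.iterate_succ_apply', mul_add]
    rw [Finset.sum_congr rfl hterm, Finset.sum_add_distrib]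
    have hRHS : ∑ j ∈ Finset.range (n + 2),
        C (((n + 1).choose j : ℚ)) * (P j * Ee^[n + 1 - j] 1) =
        (∑ j ∈ Finset.range (n + 1),
          C (((n + 1).choose (j + 1) : ℚ)) * (P (j + 1) * Ee^[n - j] 1)) +
        C (((n + 1).choose 0 : ℚ)) * (P 0 * Ee^[n + 1] 1) := by
      rw [Finset.sum_range_succ']
      simp only [Nat.succ_sub_succ_eq_sub, Nat.sub_zero]
    rw [hRHS]
    have hpascal : ∀ j ∈ Finset.range (n + 1),
        C (((n + 1).choose (j + 1) : ℚ)) * (P (j + 1) * Ee^[n - j] 1) =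
        C ((n.choose j : ℚ)) * (P (j + 1) * Ee^[n - j] 1) +
        C ((n.choose (j + 1) : ℚ)) * (P (j + 1) * Ee^[n - j] 1) := by
      intro j hj
      rw [Nat.choose_succ_succ]
      push_cast
      rw [C_add, add_mul]
    rw [Finset.sum_congr rfl hpascal, Finset.sum_add_distrib]
    have h2 : ∑ j ∈ Finset.range (n + 1), C ((n.choose j : ℚ)) * (P j * Ee^[n + 1 - j] 1) =
        (∑ j ∈ Finset.range (n + 1), C ((n.choose (j + 1) : ℚ)) * (P (j + 1) * Ee^[n - j] 1)) +
        C (((n + 1).choose 0 : ℚ)) * (P 0 * Ee^[n + 1] 1) := by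
      rw [Finset.sum_range_succ']
      congr 1
      · rw [Finset.sum_range_succ]
        simp only [Nat.choose_succ_self, Nat.cast_zero, map_zero, zero_mul, add_zero]
        simp only [Nat.succ_sub_succ_eq_sub, Nat.sub_zero]
      · simp
    rw [h2]
    ring

lemma Ee_X : Ee X = 1 := by simp [Ee]; ring

lemma Ee_C (a : ℚ) : Ee (C a) = C (-a) * X := by simp [Ee]

lemma Ee_C_mul_X (a : ℚ) : Ee (C a * X) = C a := by simp [Ee]; ring

lemma iter_even_one (i : ℕ) : Ee^[2 * i] 1 = C ((-1 : ℚ) ^ i) := by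
  induction i with
  | zero => simp
  | succ i ih =>
    have h : 2 * (i + 1) = (2 * i) + 1 + 1 := by ring
    rw [h, Function.iterate_succ_apply', Function.iterate_succ_apply', ih, Ee_C, Ee_C_mul_X]
    ring_nf

lemma iter_odd_one_eval (i : ℕ) : (Ee^[2 * i + 1] 1).eval 0 = 0 := by
  rw [Function.iterate_succ_apply', iter_even_one, Ee_C]
  simp

lemma iter_odd_X (i : ℕ) : Ee^[2 * i + 1] X = C ((-1 : ℚ) ^ i) := by
  rw [Function.iterate_succ_apply, Ee_X, iter_even_one]

lemma sum_range_pair (f : ℕ → ℚ) (m : ℕ) :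
    ∑ j ∈ Finset.range (2 * m + 2), f j =
    ∑ k ∈ Finset.range (m + 1), (f (2 * k) + f (2 * k + 1)) := by
  induction m with
  | zero => simp [Finset.sum_range_succ]
  | succ m ih =>
    have h : 2 * (m + 1) + 2 = (2 * m + 2) + 1 + 1 := by ring
    rw [h, Finset.sum_range_succ, Finset.sum_range_succ, ih, Finset.sum_range_succ]
    have h1 : 2 * (m + 1) = 2 * m + 2 := by ring
    have h2 : 2 * (m + 1) + 1 = 2 * m + 2 + 1 := by ring
    rw [Finset.sum_range_succ (fun k => f (2 * k) + f (2 * k + 1)) (m + 1),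
        ← Finset.sum_range_succ (fun k => f (2 * k) + f (2 * k + 1)) m]
    ring_nf

theorem euler_odd_alternating_sum (m : ℕ) :
    ∑ k ∈ Finset.range (m + 1),
        ((2 * m + 1).choose (2 * k) : ℚ) * (-1) ^ k * E (2 * m - 2 * k + 1) =
    (-1) ^ m := by
  have hkey := congrArg (Polynomial.eval 0) (key_s4 (2 * m + 1))
  rw [iter_odd_X, Polynomial.eval_finset_sum] at hkey
  simp only [eval_C, eval_mul] at hkey
  rw [show 2 * m + 1 + 1 = 2 * m + 2 from rfl,
      sum_range_pair (fun j => ((2 * m + 1).choose j : ℚ) *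
        ((P j).eval 0 * (Ee^[2 * m + 1 - j] 1).eval 0)) m] at hkey
  have hsum : ∀ k ∈ Finset.range (m + 1),
      (((2 * m + 1).choose (2 * k) : ℚ) *
        ((P (2 * k)).eval 0 * (Ee^[2 * m + 1 - 2 * k] 1).eval 0) +
       ((2 * m + 1).choose (2 * k + 1) : ℚ) *
        ((P (2 * k + 1)).eval 0 * (Ee^[2 * m + 1 - (2 * k + 1)] 1).eval 0)) =
      ((2 * m + 1).choose (2 * k + 1) : ℚ) * ((P (2 * k + 1)).eval 0 * (-1) ^ (m - k)) := by
    intro k hk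
    have hk' : k ≤ m := Nat.lt_succ_iff.mp (Finset.mem_range.mp hk)
    have e1 : 2 * m + 1 - 2 * k = 2 * (m - k) + 1 := by omega
    have e2 : 2 * m + 1 - (2 * k + 1) = 2 * (m - k) := by omega
    rw [e1, e2, iter_odd_one_eval, iter_even_one, eval_C]
    ring
  rw [Finset.sum_congr rfl hsum] at hkey
  have htgt : ∀ k ∈ Finset.range (m + 1),
      ((2 * m + 1).choose (2 * k) : ℚ) * (-1) ^ k * E (2 * m - 2 * k + 1) =
      (fun k => ((2 * m + 1).choose (2 * k) : ℚ) * (-1) ^ k * (P (2 * (m - k) + 1)).eval 0) k := by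
    intro k hk
    have hk' : k ≤ m := Nat.lt_succ_iff.mp (Finset.mem_range.mp hk)
    have e3 : 2 * m - 2 * k + 1 = 2 * (m - k) + 1 := by omega
    have hodd : ¬ Even (2 * (m - k) + 1) := by simp [Nat.even_add_one, parity_simps]
    rw [e3]
    simp only [E, if_neg hodd]
  rw [Finset.sum_congr rfl htgt, ← Finset.sum_range_reflect]
  rw [hkey]
  refine Finset.sum_congr rfl fun k hk => ?_
  have hk' : k ≤ m := Nat.lt_succ_iff.mp (Finset.mem_range.mp hk)
  have e4 : m + 1 - 1 - k = m - k := by omega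
  have e5 : m - (m - k) = k := by omega
  have e6 : 2 * (m - k) = 2 * m + 1 - (2 * k + 1) := by omega
  have e7 : (2 * m + 1).choose (2 * (m - k)) = (2 * m + 1).choose (2 * k + 1) := by
    rw [e6, Nat.choose_symm (by omega)]
  rw [e4, e5, e7]
  ring
end

section
/- For every integer m ≥ 0, Σ_{k=0}^{m} C(2m, 2k) (-1)^k 2^{2m-2k} E_{2m-2k} − Σ_{k=0}^{m-1} C(2m, 2k+1) (-1)^k 2^{2m-2k-1} E_{2m-2k-1} = (-1)^m, where C(m,j) denotes the binomial coefficient. -/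
open Polynomial Finset

namespace EulerAux

open scoped Nat

/-! ### Polynomial convolution identities -/

lemma convQQ (n : ℕ) :
    P (n + 1) = (1 + X ^ 2) * ∑ i ∈ range (n + 1), (n.choose i : ℚ[X]) * (Q i * Q (n - i)) := by
  induction n with
  | zero => simp [P, Q]
  | succ n ih =>
    have key : ∀ i j : ℕ, (1 + X ^ 2) * (derivative (Q i) * Q j + Q i * derivative (Q j))
        + 2 * X * (Q i * Q j) = Q (i + 1) * Q j + Q i * Q (j + 1) := by
      intro i j
      simp only [Q]
      ring
    calc P (n + 2) = (1 + X ^ 2) * derivative (P (n + 1)) := rfl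
      _ = (1 + X ^ 2) * derivative ((1 + X ^ 2) *
            ∑ i ∈ range (n + 1), (n.choose i : ℚ[X]) * (Q i * Q (n - i))) := by rw [ih]
      _ = (1 + X ^ 2) * ∑ i ∈ range (n + 1), (n.choose i : ℚ[X]) *
            ((1 + X ^ 2) * (derivative (Q i) * Q (n - i) + Q i * derivative (Q (n - i)))
              + 2 * X * (Q i * Q (n - i))) := by
        rw [derivative_mul, derivative_sum]
        rw [Finset.mul_sum, Finset.mul_sum, ← Finset.sum_add_distrib]
        congr 1
        refine Finset.sum_congr rfl fun i hi => ?_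
        rw [derivative_mul]
        have : derivative ((n.choose i : ℚ[X])) = 0 := by
          simp
        rw [this]
        simp only [derivative_add, derivative_one, derivative_X_pow, derivative_mul]
        simp only [map_ofNat, Polynomial.C_eq_natCast, pow_one, zero_mul, zero_add, add_zero,
          Nat.cast_ofNat]
        ring
      _ = (1 + X ^ 2) * ∑ i ∈ range (n + 1), (n.choose i : ℚ[X]) *
            (Q (i + 1) * Q (n - i) + Q i * Q (n - i + 1)) := by
        refine congrArg ((1 + X ^ 2) * ·) ?_
        exact Finset.sum_congr rfl fun i hi => by rw [← key]
      _ = (1 + X ^ 2) * ∑ i ∈ range (n + 2), ((n+1).choose i : ℚ[X]) * (Q i * Q (n + 1 - i)) := by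
        refine congrArg ((1 + X ^ 2) * ·) ?_
        rw [Finset.sum_choose_succ_mul (fun i j => Q i * Q j) n]
        rw [← Finset.sum_add_distrib]
        refine Finset.sum_congr rfl fun i hi => ?_
        rw [Finset.mem_range] at hi
        have h1 : n + 1 - i = n - i + 1 := by omega
        rw [h1]
        ring

lemma convQP (n : ℕ) :
    Q (n + 1) = ∑ i ∈ range (n + 1), (n.choose i : ℚ[X]) * (Q i * P (n - i)) := by
  induction n with
  | zero => simp [P, Q]
  | succ n ih =>
    have key : ∀ i j : ℕ, (1 + X ^ 2) * (derivative (Q i) * P j + Q i * derivative (P j))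
        + X * (Q i * P j) = Q (i + 1) * P j + Q i * P (j + 1) := by
      intro i j
      simp only [Q, P]
      ring
    calc Q (n + 2) = (1 + X ^ 2) * derivative (Q (n + 1)) + X * Q (n + 1) := rfl
      _ = (1 + X ^ 2) * derivative (∑ i ∈ range (n + 1), (n.choose i : ℚ[X]) * (Q i * P (n - i)))
            + X * ∑ i ∈ range (n + 1), (n.choose i : ℚ[X]) * (Q i * P (n - i)) := by rw [ih]
      _ = ∑ i ∈ range (n + 1), (n.choose i : ℚ[X]) *
            ((1 + X ^ 2) * (derivative (Q i) * P (n - i) + Q i * derivative (P (n - i)))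
              + X * (Q i * P (n - i))) := by
        rw [derivative_sum, Finset.mul_sum, Finset.mul_sum, ← Finset.sum_add_distrib]
        refine Finset.sum_congr rfl fun i hi => ?_
        rw [derivative_mul]
        have : derivative ((n.choose i : ℚ[X])) = 0 := by simp
        rw [this]
        simp only [derivative_add, derivative_one, derivative_X_pow, derivative_mul]
        simp only [map_ofNat, Polynomial.C_eq_natCast, pow_one, zero_mul, zero_add, add_zero,
          Nat.cast_ofNat]
        ring
      _ = ∑ i ∈ range (n + 1), (n.choose i : ℚ[X]) *
            (Q (i + 1) * P (n - i) + Q i * P (n - i + 1)) := by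
        exact Finset.sum_congr rfl fun i hi => by rw [← key]
      _ = ∑ i ∈ range (n + 2), ((n+1).choose i : ℚ[X]) * (Q i * P (n + 1 - i)) := by
        rw [Finset.sum_choose_succ_mul (fun i j => Q i * P j) n]
        rw [← Finset.sum_add_distrib]
        refine Finset.sum_congr rfl fun i hi => ?_
        rw [Finset.mem_range] at hi
        have h1 : n + 1 - i = n - i + 1 := by omega
        rw [h1]
        ring

/-! ### Parity -/

lemma parity (n : ℕ) : (P n).comp (-X) = ((-1 : ℚ) ^ (n + 1)) • P n ∧
    (Q n).comp (-X) = ((-1 : ℚ) ^ n) • Q n := by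
  induction n with
  | zero => simp [P, Q]
  | succ n ih =>
    obtain ⟨hP, hQ⟩ := ih
    have dcomp : ∀ p : ℚ[X], (derivative p).comp (-X) = -derivative (p.comp (-X)) := by
      intro p
      rw [derivative_comp]
      simp [mul_comm]
    have hsq : ((1 + X ^ 2 : ℚ[X])).comp (-X) = 1 + X ^ 2 := by simp
    constructor
    · rw [show P (n + 1) = (1 + X ^ 2) * derivative (P n) from rfl, mul_comp, hsq, dcomp, hP,
        derivative_smul]
      simp only [smul_eq_C_mul, map_pow, map_neg, map_one]
      rw [pow_succ]
      ring
    · rw [show Q (n + 1) = (1 + X ^ 2) * derivative (Q n) + X * Q n from rfl, add_comp, mul_comp,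
        mul_comp, hsq, dcomp, hQ, derivative_smul, X_comp]
      simp only [smul_eq_C_mul, map_pow, map_neg, map_one]
      rw [pow_succ]
      ring

lemma P_even_eval {n : ℕ} (h : Even n) : (P n).eval 0 = 0 := by
  have hp := (parity n).1
  have h2 : ((P n).comp (-X)).eval 0 = (P n).eval 0 := by
    rw [eval_comp]
    simp
  rw [hp] at h2
  rw [eval_smul, pow_succ, h.neg_one_pow, one_mul, smul_eq_mul, neg_one_mul] at h2
  linarith

lemma Q_odd_eval {n : ℕ} (h : ¬ Even n) : (Q n).eval 0 = 0 := by
  have hq := (parity n).2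
  have h2 : ((Q n).comp (-X)).eval 0 = (Q n).eval 0 := by
    rw [eval_comp]; simp
  rw [hq] at h2
  rw [eval_smul, (Nat.not_even_iff_odd.mp h).neg_one_pow, smul_eq_mul, neg_one_mul] at h2
  linarith

/-! ### Scalar convolution identities -/

lemma evalP_succ (n : ℕ) : (P (n + 1)).eval 0 =
    ∑ i ∈ range (n + 1), (n.choose i : ℚ) * ((Q i).eval 0 * (Q (n - i)).eval 0) := by
  have := congrArg (Polynomial.eval (0 : ℚ)) (convQQ n)
  rw [eval_mul, eval_finset_sum] at this
  simpa using this

lemma evalQ_succ (n : ℕ) : (Q (n + 1)).eval 0 =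
    ∑ i ∈ range (n + 1), (n.choose i : ℚ) * ((Q i).eval 0 * (P (n - i)).eval 0) := by
  have := congrArg (Polynomial.eval (0 : ℚ)) (convQP n)
  rw [eval_finset_sum] at this
  simpa using this

/-! ### Power series -/

def cF (n : ℕ) : ℚ := if n % 4 = 0 then 1 else if n % 4 = 1 then -1 else if n % 4 = 2 then -1
  else 1

def dH (n : ℕ) : ℚ := if n % 4 = 0 then 1 else if n % 4 = 1 then 1 else if n % 4 = 2 then -1
  else -1

def gC (n : ℕ) : ℚ := if n % 4 = 0 then 2 ^ n else if n % 4 = 2 then -(2 ^ n) else 0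

def sC (n : ℕ) : ℚ := if n % 4 = 1 then 2 ^ n else if n % 4 = 3 then -(2 ^ n) else 0

lemma cF_succ (n : ℕ) : cF (n + 1) = -dH n := by
  rcases (show n % 4 = 0 ∨ n % 4 = 1 ∨ n % 4 = 2 ∨ n % 4 = 3 by omega) with h | h | h | h
  · simp [cF, dH, h, show (n + 1) % 4 = 1 by omega]
  · simp [cF, dH, h, show (n + 1) % 4 = 2 by omega]
  · simp [cF, dH, h, show (n + 1) % 4 = 3 by omega]
  · simp [cF, dH, h, show (n + 1) % 4 = 0 by omega]

lemma dH_succ (n : ℕ) : dH (n + 1) = cF n := by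
  rcases (show n % 4 = 0 ∨ n % 4 = 1 ∨ n % 4 = 2 ∨ n % 4 = 3 by omega) with h | h | h | h
  · simp [cF, dH, h, show (n + 1) % 4 = 1 by omega]
  · simp [cF, dH, h, show (n + 1) % 4 = 2 by omega]
  · simp [cF, dH, h, show (n + 1) % 4 = 3 by omega]
  · simp [cF, dH, h, show (n + 1) % 4 = 0 by omega]

lemma gC_succ (n : ℕ) : gC (n + 1) = -2 * sC n := by
  rcases (show n % 4 = 0 ∨ n % 4 = 1 ∨ n % 4 = 2 ∨ n % 4 = 3 by omega) with h | h | h | h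
  · simp [gC, sC, h, show (n + 1) % 4 = 1 by omega]
  · simp [gC, sC, h, show (n + 1) % 4 = 2 by omega]; ring
  · simp [gC, sC, h, show (n + 1) % 4 = 3 by omega]
  · simp [gC, sC, h, show (n + 1) % 4 = 0 by omega]; ring

lemma sC_succ (n : ℕ) : sC (n + 1) = 2 * gC n := by
  rcases (show n % 4 = 0 ∨ n % 4 = 1 ∨ n % 4 = 2 ∨ n % 4 = 3 by omega) with h | h | h | h
  · simp [gC, sC, h, show (n + 1) % 4 = 1 by omega]; ring
  · simp [gC, sC, h, show (n + 1) % 4 = 2 by omega]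
  · simp [gC, sC, h, show (n + 1) % 4 = 3 by omega]; ring
  · simp [gC, sC, h, show (n + 1) % 4 = 0 by omega]

noncomputable def F : PowerSeries ℚ := PowerSeries.mk fun n => cF n / n !
noncomputable def H : PowerSeries ℚ := PowerSeries.mk fun n => dH n / n !
noncomputable def G2 : PowerSeries ℚ := PowerSeries.mk fun n => gC n / n !
noncomputable def S2 : PowerSeries ℚ := PowerSeries.mk fun n => sC n / n !
noncomputable def Y : PowerSeries ℚ := PowerSeries.mk fun n => (2 ^ n * (P n).eval 0) / n !
noncomputable def W : PowerSeries ℚ := PowerSeries.mk fun n => (2 ^ n * (Q n).eval 0) / n !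

local notation "DD" => PowerSeries.derivative ℚ

lemma DD_mul (a b : PowerSeries ℚ) : DD (a * b) = a * DD b + b * DD a := by
  simpa [smul_eq_mul] using (PowerSeries.derivative ℚ).leibniz a b

lemma DD_mk (a : ℕ → ℚ) :
    DD (PowerSeries.mk fun n => a n / n !) = PowerSeries.mk fun n => a (n + 1) / n ! := by
  ext n
  rw [PowerSeries.coeff_derivative, PowerSeries.coeff_mk, PowerSeries.coeff_mk]
  rw [Nat.factorial_succ]
  push_cast
  have h1 : ((n ! : ℚ)) ≠ 0 := Nat.cast_ne_zero.mpr (Nat.factorial_ne_zero n)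
  have h2 : ((n : ℚ) + 1) ≠ 0 := by positivity
  field_simp

lemma DD_F : DD F = -H := by
  rw [F, DD_mk]
  ext n
  rw [PowerSeries.coeff_mk, map_neg, H, PowerSeries.coeff_mk, cF_succ]
  ring

lemma DD_H : DD H = F := by
  rw [H, DD_mk]
  ext n
  rw [PowerSeries.coeff_mk, F, PowerSeries.coeff_mk, dH_succ]

lemma DD_G2 : DD G2 = -(2 * S2) := by
  rw [G2, DD_mk]
  ext n
  rw [PowerSeries.coeff_mk, map_neg, two_mul, map_add, S2, PowerSeries.coeff_mk, gC_succ]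
  ring

lemma DD_S2 : DD S2 = 2 * G2 := by
  rw [S2, DD_mk]
  ext n
  rw [PowerSeries.coeff_mk, two_mul, map_add, G2, PowerSeries.coeff_mk, sC_succ]
  ring

lemma conv_coeff (a b : ℕ → ℚ) (n : ℕ) :
    PowerSeries.coeff n
      ((PowerSeries.mk fun k => a k / k !) * (PowerSeries.mk fun k => b k / k !)) =
    (∑ i ∈ range (n + 1), (n.choose i : ℚ) * (a i * b (n - i))) / n ! := by
  rw [PowerSeries.coeff_mul, Finset.Nat.sum_antidiagonal_eq_sum_range_succ_mk, Finset.sum_div]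
  refine Finset.sum_congr rfl fun i hi => ?_
  rw [Finset.mem_range] at hi
  have hle : i ≤ n := by omega
  rw [PowerSeries.coeff_mk, PowerSeries.coeff_mk]
  have key : ((n.choose i : ℚ)) * (i ! : ℚ) * ((n - i)! : ℚ) = (n ! : ℚ) := by
    rw [← Nat.cast_mul, ← Nat.cast_mul, Nat.choose_mul_factorial_mul_factorial hle]
  have h1 : ((i ! : ℚ)) ≠ 0 := Nat.cast_ne_zero.mpr (Nat.factorial_ne_zero _)
  have h2 : (((n - i)! : ℚ)) ≠ 0 := Nat.cast_ne_zero.mpr (Nat.factorial_ne_zero _)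
  have h3 : ((n ! : ℚ)) ≠ 0 := Nat.cast_ne_zero.mpr (Nat.factorial_ne_zero _)
  field_simp
  rw [← key]
  ring

lemma pow_split {n i : ℕ} (h : i ≤ n) : (2 : ℚ) ^ i * 2 ^ (n - i) = 2 ^ n := by
  rw [← pow_add]
  congr 1
  omega

lemma DD_Y : DD Y = 2 * (W * W) := by
  rw [Y, DD_mk]
  ext n
  rw [PowerSeries.coeff_mk, two_mul, map_add]
  rw [show W * W = (PowerSeries.mk fun k => (2 ^ k * (Q k).eval 0) / k !) *
    (PowerSeries.mk fun k => (2 ^ k * (Q k).eval 0) / k !) from rfl, conv_coeff]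
  rw [evalP_succ]
  rw [← add_div]
  congr 1
  rw [Finset.mul_sum, ← Finset.sum_add_distrib]
  refine Finset.sum_congr rfl fun i hi => ?_
  rw [Finset.mem_range] at hi
  have := pow_split (show i ≤ n by omega)
  rw [pow_succ, ← this]
  ring

lemma DD_W : DD W = 2 * (W * Y) := by
  conv_lhs => rw [W, DD_mk]
  ext n
  rw [PowerSeries.coeff_mk, two_mul, map_add]
  rw [show W * Y = (PowerSeries.mk fun k => (2 ^ k * (Q k).eval 0) / k !) *
    (PowerSeries.mk fun k => (2 ^ k * (P k).eval 0) / k !) from rfl, conv_coeff]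
  rw [evalQ_succ]
  rw [← add_div]
  congr 1
  rw [Finset.mul_sum, ← Finset.sum_add_distrib]
  refine Finset.sum_congr rfl fun i hi => ?_
  rw [Finset.mem_range] at hi
  have := pow_split (show i ≤ n by omega)
  rw [pow_succ, ← this]
  ring

/-! ### Uniqueness of ODE solutions -/

lemma sys {d e a b : PowerSeries ℚ} (hd : DD d = a * e) (he : DD e = b * d)
    (hd0 : PowerSeries.coeff 0 d = 0) (he0 : PowerSeries.coeff 0 e = 0) :
    d = 0 ∧ e = 0 := by
  have key : ∀ n, PowerSeries.coeff n d = 0 ∧ PowerSeries.coeff n e = 0 := by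
    intro n
    induction n using Nat.strong_induction_on with
    | _ n ih =>
      match n with
      | 0 => exact ⟨hd0, he0⟩
      | n + 1 =>
        constructor
        · have h := congrArg (PowerSeries.coeff n) hd
          rw [PowerSeries.coeff_derivative, PowerSeries.coeff_mul] at h
          have hz : ∑ p ∈ Finset.HasAntidiagonal.antidiagonal n,
              PowerSeries.coeff p.1 a * PowerSeries.coeff p.2 e = 0 := by
            refine Finset.sum_eq_zero fun p hp => ?_
            rw [Finset.HasAntidiagonal.mem_antidiagonal] at hp
            rw [(ih p.2 (by omega)).2, mul_zero]
          rw [hz] at h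
          have hn : ((n : ℚ) + 1) ≠ 0 := by positivity
          have := mul_eq_zero.mp h
          tauto
        · have h := congrArg (PowerSeries.coeff n) he
          rw [PowerSeries.coeff_derivative, PowerSeries.coeff_mul] at h
          have hz : ∑ p ∈ Finset.HasAntidiagonal.antidiagonal n,
              PowerSeries.coeff p.1 b * PowerSeries.coeff p.2 d = 0 := by
            refine Finset.sum_eq_zero fun p hp => ?_
            rw [Finset.HasAntidiagonal.mem_antidiagonal] at hp
            rw [(ih p.2 (by omega)).1, mul_zero]
          rw [hz] at h
          have hn : ((n : ℚ) + 1) ≠ 0 := by positivity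
          have := mul_eq_zero.mp h
          tauto
  constructor <;> · ext n; simp [key n]

lemma coeff0_F : PowerSeries.coeff 0 F = 1 := by simp [F, PowerSeries.coeff_mk, cF]
lemma coeff0_H : PowerSeries.coeff 0 H = 1 := by simp [H, PowerSeries.coeff_mk, dH]
lemma coeff0_G2 : PowerSeries.coeff 0 G2 = 1 := by simp [G2, PowerSeries.coeff_mk, gC]
lemma coeff0_S2 : PowerSeries.coeff 0 S2 = 0 := by simp [S2, PowerSeries.coeff_mk, sC]
lemma coeff0_Y : PowerSeries.coeff 0 Y = 0 := by simp [Y, PowerSeries.coeff_mk, P]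
lemma coeff0_W : PowerSeries.coeff 0 W = 1 := by simp [W, PowerSeries.coeff_mk, Q]

/-! ### The chain of identities -/

lemma W_sq : W * W = 1 + Y * Y := by
  have hD : DD (W * W - (1 + Y * Y)) = (0 : PowerSeries ℚ) * (W * W - (1 + Y * Y)) := by
    rw [map_sub, map_add, Derivation.map_one_eq_zero, DD_mul, DD_mul, DD_Y, DD_W]
    ring
  have h0 : PowerSeries.coeff 0 (W * W - (1 + Y * Y)) = 0 := by
    rw [map_sub, map_add, PowerSeries.coeff_mul, PowerSeries.coeff_mul]
    simp [coeff0_W, coeff0_Y]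
  have := (sys hD hD h0 h0).1
  linear_combination this

lemma FH_eq_G2 : F * H = G2 := by
  set d := F * H - G2 with hdd
  set e := F * F - H * H + 2 * S2 with hee
  have hD1 : DD d = 1 * e := by
    rw [hdd, hee, map_sub, DD_mul, DD_G2, DD_F, DD_H]
    ring
  have hD2 : DD e = (-4 : PowerSeries ℚ) * d := by
    rw [hee, hdd, map_add, map_sub, DD_mul, DD_mul, DD_F, DD_H,
      show ((2 : PowerSeries ℚ) * S2) = S2 + S2 by ring, map_add, DD_S2]
    ring
  have h01 : PowerSeries.coeff 0 d = 0 := by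
    rw [hdd, map_sub, PowerSeries.coeff_mul]
    simp [coeff0_F, coeff0_H, coeff0_G2]
  have h02 : PowerSeries.coeff 0 e = 0 := by
    rw [hee, map_add, map_sub, PowerSeries.coeff_mul, PowerSeries.coeff_mul,
      show ((2 : PowerSeries ℚ) * S2) = S2 + S2 by ring, map_add]
    simp [coeff0_F, coeff0_H, coeff0_S2]
  have := (sys hD1 hD2 h01 h02).1
  rw [hdd] at this
  linear_combination this

lemma G2Y_eq_S2 : G2 * Y = S2 := by
  set d := G2 * Y - S2 with hdd
  have hD : DD d = (2 * Y) * d := by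
    rw [hdd, map_sub, DD_mul, DD_G2, DD_Y, DD_S2]
    have := W_sq
    linear_combination (2 * G2) * this
  have h0 : PowerSeries.coeff 0 d = 0 := by
    rw [hdd, map_sub, PowerSeries.coeff_mul]
    simp [coeff0_G2, coeff0_Y, coeff0_S2]
  have := (sys hD hD h0 h0).1
  rw [hdd] at this
  linear_combination this

lemma G2W_eq_one : G2 * W = 1 := by
  set d := G2 * W - 1 with hdd
  have hD : DD d = (0 : PowerSeries ℚ) * d := by
    rw [hdd, map_sub, Derivation.map_one_eq_zero, DD_mul, DD_G2, DD_W]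
    have := G2Y_eq_S2
    linear_combination (2 * W) * this
  have h0 : PowerSeries.coeff 0 d = 0 := by
    rw [hdd, map_sub, PowerSeries.coeff_mul]
    simp [coeff0_G2, coeff0_W]
  have := (sys hD hD h0 h0).1
  rw [hdd] at this
  linear_combination this

lemma H_sq : H * H = 1 + S2 := by
  set d := H * H - (1 + S2) with hdd
  have hD : DD d = (0 : PowerSeries ℚ) * d := by
    rw [hdd, map_sub, map_add, Derivation.map_one_eq_zero, DD_mul, DD_H, DD_S2]
    have := FH_eq_G2
    linear_combination 2 * this
  have h0 : PowerSeries.coeff 0 d = 0 := by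
    rw [hdd, map_sub, map_add, PowerSeries.coeff_mul]
    simp [coeff0_H, coeff0_S2]
  have := (sys hD hD h0 h0).1
  rw [hdd] at this
  linear_combination this

lemma main_identity : F * (Y + W) = H := by
  have hH : H ≠ 0 := by
    intro h
    have := coeff0_H
    rw [h] at this
    simp at this
  apply mul_right_cancel₀ hH
  calc F * (Y + W) * H = (F * H) * Y + (F * H) * W := by ring
    _ = G2 * Y + G2 * W := by rw [FH_eq_G2]
    _ = S2 + 1 := by rw [G2Y_eq_S2, G2W_eq_one]
    _ = H * H := by rw [H_sq]; ring

/-! ### Extraction -/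

lemma YW_eq : Y + W = PowerSeries.mk fun n => (2 ^ n * E n) / n ! := by
  ext n
  rw [map_add, Y, W, PowerSeries.coeff_mk, PowerSeries.coeff_mk, PowerSeries.coeff_mk]
  rcases Nat.even_or_odd n with h | h
  · rw [P_even_eval h, show E n = (Q n).eval 0 by rw [E, if_pos h]]
    ring
  · rw [Q_odd_eval (Nat.not_even_iff_odd.mpr h), show E n = (P n).eval 0 by
      rw [E, if_neg (Nat.not_even_iff_odd.mpr h)]]
    ring

lemma dH_two_mul (m : ℕ) : dH (2 * m) = (-1) ^ m := by
  rcases Nat.even_or_odd m with ⟨t, ht⟩ | ⟨t, ht⟩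
  · rw [dH, if_pos (by omega), Even.neg_one_pow ⟨t, ht⟩]
  · rw [dH, if_neg (by omega), if_neg (by omega), if_pos (by omega),
      Odd.neg_one_pow ⟨t, by omega⟩]

lemma cF_two_mul (k : ℕ) : cF (2 * k) = (-1) ^ k := by
  rcases Nat.even_or_odd k with ⟨t, ht⟩ | ⟨t, ht⟩
  · rw [cF, if_pos (by omega), Even.neg_one_pow ⟨t, ht⟩]
  · rw [cF, if_neg (by omega), if_neg (by omega), if_pos (by omega),
      Odd.neg_one_pow ⟨t, by omega⟩]

lemma cF_two_mul_add_one (k : ℕ) : cF (2 * k + 1) = -(-1) ^ k := by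
  rcases Nat.even_or_odd k with ⟨t, ht⟩ | ⟨t, ht⟩
  · rw [cF, if_neg (by omega), if_pos (by omega), Even.neg_one_pow ⟨t, ht⟩]
  · rw [cF, if_neg (by omega), if_neg (by omega), if_neg (by omega),
      Odd.neg_one_pow ⟨t, by omega⟩]
    ring

lemma sum_even_odd (G : ℕ → ℚ) (N : ℕ) :
    ∑ i ∈ range (2 * N + 1), G i =
      (∑ k ∈ range (N + 1), G (2 * k)) + ∑ k ∈ range N, G (2 * k + 1) := by
  induction N with
  | zero => simp
  | succ N ih =>
    rw [show 2 * (N + 1) + 1 = (2 * N + 1) + 1 + 1 by ring, Finset.sum_range_succ,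
      Finset.sum_range_succ, ih,
      Finset.sum_range_succ (fun k => G (2 * k)) (N + 1),
      Finset.sum_range_succ (fun k => G (2 * k + 1)) N,
      show 2 * N + 1 + 1 = 2 * (N + 1) by ring]
    ring

lemma final (m : ℕ) :
    (∑ k ∈ Finset.range (m + 1),
        ((2 * m).choose (2 * k) : ℚ) * (-1) ^ k * 2 ^ (2 * m - 2 * k) * E (2 * m - 2 * k)) -
      (∑ k ∈ Finset.range m,
        ((2 * m).choose (2 * k + 1) : ℚ) * (-1) ^ k * 2 ^ (2 * m - 2 * k - 1) *
          E (2 * m - 2 * k - 1)) =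
    (-1) ^ m := by
  have hfac : ((Nat.factorial (2 * m) : ℚ)) ≠ 0 := Nat.cast_ne_zero.mpr (Nat.factorial_ne_zero _)
  have key := congrArg (PowerSeries.coeff (2 * m)) main_identity
  rw [YW_eq] at key
  rw [show F = (PowerSeries.mk fun n => cF n / n !) from rfl] at key
  rw [EulerAux.conv_coeff (fun n => cF n) (fun n => 2 ^ n * E n) (2 * m)] at key
  rw [show H = (PowerSeries.mk fun n => dH n / n !) from rfl, PowerSeries.coeff_mk,
    dH_two_mul] at key
  have key2 : ∑ i ∈ range (2 * m + 1),
      ((2 * m).choose i : ℚ) * (cF i * (2 ^ (2 * m - i) * E (2 * m - i))) = (-1) ^ m := by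
    field_simp at key
    rw [← key]
    exact Finset.sum_congr rfl fun i _ => by ring
  rw [sum_even_odd (fun i => ((2 * m).choose i : ℚ) * (cF i * (2 ^ (2 * m - i) * E (2 * m - i))))
    m] at key2
  rw [← key2]
  have he : ∀ k, ((2 * m).choose (2 * k) : ℚ) * (-1) ^ k * 2 ^ (2 * m - 2 * k) * E (2 * m - 2 * k)
      = ((2 * m).choose (2 * k) : ℚ) * (cF (2 * k) * (2 ^ (2 * m - 2 * k) * E (2 * m - 2 * k))) :=
    fun k => by rw [cF_two_mul]; ring
  have ho : ∀ k, ((2 * m).choose (2 * k + 1) : ℚ) * (-1) ^ k * 2 ^ (2 * m - 2 * k - 1) *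
        E (2 * m - 2 * k - 1)
      = -(((2 * m).choose (2 * k + 1) : ℚ) *
          (cF (2 * k + 1) * (2 ^ (2 * m - (2 * k + 1)) * E (2 * m - (2 * k + 1))))) := by
    intro k
    rw [cF_two_mul_add_one, show 2 * m - (2 * k + 1) = 2 * m - 2 * k - 1 by omega]
    ring
  rw [Finset.sum_congr rfl fun k _ => he k, Finset.sum_congr rfl fun k _ => ho k]
  rw [Finset.sum_neg_distrib]
  ring

end EulerAux

theorem euler_even_alternating_identity (m : ℕ) :
    (∑ k ∈ Finset.range (m + 1),
        ((2 * m).choose (2 * k) : ℚ) * (-1) ^ k * 2 ^ (2 * m - 2 * k) * E (2 * m - 2 * k)) -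
      (∑ k ∈ Finset.range m,
        ((2 * m).choose (2 * k + 1) : ℚ) * (-1) ^ k * 2 ^ (2 * m - 2 * k - 1) *
          E (2 * m - 2 * k - 1)) =
    (-1) ^ m := by
  exact EulerAux.final m
end

section
/- For every integer m ≥ 0, Σ_{k=0}^{m} C(2m+1, 2k+1) (-1)^k 2^{2m-2k} E_{2m-2k} − Σ_{k=0}^{m} C(2m+1, 2k) (-1)^k 2^{2m-2k+1} E_{2m-2k+1} = (-1)^{m+1}, where C(m,j) denotes the binomial coefficient. -/
open Polynomial Finset

open scoped PowerSeries

lemma P_succ (n : ℕ) : P (n+1) = (1 + X ^ 2) * derivative (P n) := rfl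
lemma Q_succ (n : ℕ) : Q (n+1) = (1 + X ^ 2) * derivative (Q n) + X * Q n := rfl


lemma PQ_parity (n : ℕ) : (P n).comp (-X) = (-1)^(n+1) * P n ∧
    (Q n).comp (-X) = (-1)^n * Q n := by
  induction n with
  | zero => simp [P, Q]
  | succ n ih =>
    obtain ⟨hP, hQ⟩ := ih
    have hdP : (derivative (P n)).comp (-X) = -((-1:ℚ[X])^(n+1) * derivative (P n)) := by
      have := congrArg derivative hP
      rw [derivative_comp] at this
      simp only [derivative_mul, derivative_neg, derivative_X, derivative_pow,
        derivative_one, mul_zero, zero_mul, add_zero, mul_one, mul_neg, neg_mul,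
        one_mul, zero_add] at this
      linear_combination -this
    have hdQ : (derivative (Q n)).comp (-X) = -((-1:ℚ[X])^n * derivative (Q n)) := by
      have := congrArg derivative hQ
      rw [derivative_comp] at this
      simp only [derivative_mul, derivative_neg, derivative_X, derivative_pow,
        derivative_one, mul_zero, zero_mul, add_zero, mul_one, mul_neg, neg_mul,
        one_mul, zero_add] at this
      linear_combination -this
    constructor
    · rw [P_succ n, mul_comp, add_comp, one_comp, pow_comp, X_comp, hdP]
      ring
    · rw [Q_succ n, add_comp, mul_comp, mul_comp, add_comp, one_comp, pow_comp, X_comp,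
        hdQ, hQ]
      ring

lemma P_eval0_even {n : ℕ} (h : Even n) : (P n).eval 0 = 0 := by
  have := congrArg (eval 0) (PQ_parity n).1
  rw [eval_comp] at this
  rw [Odd.neg_one_pow (Even.add_one h)] at this
  simp at this
  linarith

lemma Q_eval0_odd {n : ℕ} (h : Odd n) : (Q n).eval 0 = 0 := by
  have := congrArg (eval 0) (PQ_parity n).2
  rw [eval_comp] at this
  simp [Odd.neg_one_pow h] at this
  linarith

local notation "R" => Polynomial ℚ
local notation "DD" => PowerSeries.derivative R

/-- the operator (1+t²)∂_t acting coefficientwise on power series over ℚ[t] -/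
noncomputable def th (F : R⟦X⟧) : R⟦X⟧ :=
  PowerSeries.mk fun n => (1 + X ^ 2) * derivative (PowerSeries.coeff n F)

lemma coeff_th (F : R⟦X⟧) (n : ℕ) :
    PowerSeries.coeff n (th F) = (1 + X ^ 2) * derivative (PowerSeries.coeff n F) :=
  PowerSeries.coeff_mk _ _

lemma th_add (F G : R⟦X⟧) : th (F + G) = th F + th G := by
  apply PowerSeries.ext; intro n
  simp [coeff_th, mul_add]

lemma th_sub (F G : R⟦X⟧) : th (F - G) = th F - th G := by
  apply PowerSeries.ext; intro n
  simp [coeff_th, mul_sub]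

lemma th_one : th 1 = 0 := by
  apply PowerSeries.ext; intro n
  rcases n with _ | n <;> simp [coeff_th]

lemma th_mul (F G : R⟦X⟧) : th (F * G) = th F * G + F * th G := by
  apply PowerSeries.ext; intro n
  simp only [coeff_th, PowerSeries.coeff_mul, map_add]
  rw [map_sum (Polynomial.derivative) _ _, Finset.mul_sum, ← Finset.sum_add_distrib]
  apply Finset.sum_congr rfl
  intro p _
  rw [derivative_mul]
  ring

lemma th_D (F : R⟦X⟧) : th (DD F) = DD (th F) := by
  apply PowerSeries.ext; intro n
  simp only [coeff_th, PowerSeries.coeff_derivative, derivative_mul]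
  have : derivative ((n : R) + 1) = 0 := by simp
  rw [this]
  ring

noncomputable def TAP : R⟦X⟧ :=
  PowerSeries.mk fun n => Polynomial.C ((Nat.factorial n : ℚ))⁻¹ * P n

noncomputable def SEP : R⟦X⟧ :=
  PowerSeries.mk fun n => Polynomial.C ((Nat.factorial n : ℚ))⁻¹ * Q n

lemma natCast_eq_C (n : ℕ) : ((n : R) + 1) = Polynomial.C ((n : ℚ) + 1) := by simp

lemma fact_inv_mul (n : ℕ) :
    ((Nat.factorial (n+1) : ℚ))⁻¹ * ((n : ℚ) + 1) = ((Nat.factorial n : ℚ))⁻¹ := by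
  rw [Nat.factorial_succ]
  push_cast
  rw [mul_inv]
  field_simp

lemma C_fact_inv_mul (n : ℕ) :
    (Polynomial.C (((Nat.factorial (n+1) : ℚ))⁻¹) : R) * Polynomial.C ((n : ℚ) + 1)
      = Polynomial.C ((Nat.factorial n : ℚ))⁻¹ := by
  rw [← map_mul, fact_inv_mul]

lemma hDTAP : DD TAP = th TAP := by
  apply PowerSeries.ext; intro n
  rw [PowerSeries.coeff_derivative, coeff_th, TAP, PowerSeries.coeff_mk,
    PowerSeries.coeff_mk, P_succ, derivative_C_mul, natCast_eq_C]
  linear_combination ((1 + X^2) * derivative (P n)) * C_fact_inv_mul n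

lemma hDSEP : DD SEP = th SEP + PowerSeries.C X * SEP := by
  apply PowerSeries.ext; intro n
  rw [PowerSeries.coeff_derivative, map_add, coeff_th, SEP, PowerSeries.coeff_C_mul]
  simp only [PowerSeries.coeff_mk]
  rw [Q_succ, derivative_C_mul, natCast_eq_C]
  linear_combination ((1 + X^2) * derivative (Q n) + X * Q n) * C_fact_inv_mul n

lemma coeff_ne : ∀ n : ℕ, ((n : R) + 1) ≠ 0 := by
  intro n
  rw [natCast_eq_C]
  simp only [ne_eq, Polynomial.C_eq_zero]
  positivity

section Dlemmas

variable {A : Type*} [CommRing A]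

lemma D_add (F G : A⟦X⟧) :
    PowerSeries.derivative A (F + G)
      = PowerSeries.derivative A F + PowerSeries.derivative A G := by
  apply PowerSeries.ext; intro n
  simp [PowerSeries.coeff_derivative, add_mul]

lemma D_sub (F G : A⟦X⟧) :
    PowerSeries.derivative A (F - G)
      = PowerSeries.derivative A F - PowerSeries.derivative A G := by
  apply PowerSeries.ext; intro n
  simp [PowerSeries.coeff_derivative, sub_mul]

lemma D_one : PowerSeries.derivative A (1 : A⟦X⟧) = 0 := by
  apply PowerSeries.ext; intro n
  simp [PowerSeries.coeff_derivative, PowerSeries.coeff_one]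

lemma D_mul (F G : A⟦X⟧) :
    PowerSeries.derivative A (F * G)
      = F * PowerSeries.derivative A G + G * PowerSeries.derivative A F := by
  have := PowerSeries.derivativeFun_mul F G
  simpa [smul_eq_mul] using this

lemma D_C (r : A) : PowerSeries.derivative A (PowerSeries.C r) = 0 := by
  apply PowerSeries.ext; intro n
  simp [PowerSeries.coeff_derivative, PowerSeries.coeff_C]

end Dlemmas

lemma key1 : DD TAP = 1 + TAP * TAP := by
  have hth : th (DD TAP - (1 + TAP * TAP)) = DD (DD TAP - (1 + TAP * TAP)) := by
    rw [th_sub, th_add, th_one, th_mul, th_D, D_sub, D_add, D_one, D_mul, hDTAP]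
    ring
  have hcoeff : ∀ n, PowerSeries.coeff n (DD TAP - (1 + TAP * TAP)) = 0 := by
    intro n
    induction n with
    | zero =>
      simp only [map_sub, map_add, PowerSeries.coeff_derivative, PowerSeries.coeff_mul,
        Finset.Nat.antidiagonal_zero, Finset.sum_singleton, TAP, PowerSeries.coeff_mk,
        PowerSeries.coeff_one]
      rw [P_succ 0]
      show Polynomial.C ((Nat.factorial 1 : ℚ))⁻¹ * ((1 + X ^ 2) * derivative (P 0)) *
          ((0 : ℕ) + 1 : R) - (1 + Polynomial.C ((Nat.factorial 0 : ℚ))⁻¹ * P 0 *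
          (Polynomial.C ((Nat.factorial 0 : ℚ))⁻¹ * P 0)) = 0
      show Polynomial.C ((Nat.factorial 1 : ℚ))⁻¹ * ((1 + X ^ 2) * derivative (X : R)) *
          ((0 : ℕ) + 1 : R) - (1 + Polynomial.C ((Nat.factorial 0 : ℚ))⁻¹ * (X : R) *
          (Polynomial.C ((Nat.factorial 0 : ℚ))⁻¹ * X)) = 0
      simp [Nat.factorial]
      ring
    | succ n ih =>
      have := congrArg (PowerSeries.coeff n) hth
      rw [coeff_th, ih, PowerSeries.coeff_derivative] at this
      simp only [map_zero, mul_zero] at this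
      rcases mul_eq_zero.mp this.symm with h | h
      · exact h
      · exact absurd h (coeff_ne n)
  apply PowerSeries.ext; intro n
  have := hcoeff n
  rwa [map_sub, sub_eq_zero] at this

lemma key2 : DD SEP = TAP * SEP := by
  have hth : DD (DD SEP - TAP * SEP)
      = th (DD SEP - TAP * SEP) + PowerSeries.C X * (DD SEP - TAP * SEP) := by
    rw [D_sub, D_mul, th_sub, th_mul, th_D, hDSEP, hDTAP, D_add, D_mul, D_C, hDSEP]
    ring
  have hcoeff : ∀ n, PowerSeries.coeff n (DD SEP - TAP * SEP) = 0 := by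
    intro n
    induction n with
    | zero =>
      simp only [map_sub, PowerSeries.coeff_derivative, PowerSeries.coeff_mul,
        Finset.Nat.antidiagonal_zero, Finset.sum_singleton, TAP, SEP, PowerSeries.coeff_mk]
      rw [Q_succ 0]
      show Polynomial.C ((Nat.factorial 1 : ℚ))⁻¹ *
          ((1 + X ^ 2) * derivative (Q 0) + X * Q 0) * ((0 : ℕ) + 1 : R) -
          Polynomial.C ((Nat.factorial 0 : ℚ))⁻¹ * P 0 *
          (Polynomial.C ((Nat.factorial 0 : ℚ))⁻¹ * Q 0) = 0
      show Polynomial.C ((Nat.factorial 1 : ℚ))⁻¹ *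
          ((1 + X ^ 2) * derivative (1 : R) + X * 1) * ((0 : ℕ) + 1 : R) -
          Polynomial.C ((Nat.factorial 0 : ℚ))⁻¹ * (X : R) *
          (Polynomial.C ((Nat.factorial 0 : ℚ))⁻¹ * 1) = 0
      simp [Nat.factorial]
    | succ n ih =>
      have := congrArg (PowerSeries.coeff n) hth
      rw [PowerSeries.coeff_derivative, map_add, coeff_th, PowerSeries.coeff_C_mul,
        ih] at this
      simp only [derivative_zero, mul_zero, add_zero] at this
      rcases mul_eq_zero.mp this with h | h
      · exact h
      · exact absurd h (coeff_ne n)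
  apply PowerSeries.ext; intro n
  have := hcoeff n
  rwa [map_sub, sub_eq_zero] at this


local notation "DC" => PowerSeries.derivative ℂ

noncomputable def phi : R →+* ℂ := (algebraMap ℚ ℂ).comp (Polynomial.evalRingHom (0:ℚ))

lemma map_D (F : R⟦X⟧) :
    DC (PowerSeries.map phi F) = PowerSeries.map phi (DD F) := by
  apply PowerSeries.ext; intro n
  rw [PowerSeries.coeff_derivative, PowerSeries.coeff_map, PowerSeries.coeff_map,
    PowerSeries.coeff_derivative, map_mul]
  congr 1
  simp

noncomputable def TA : ℂ⟦X⟧ := PowerSeries.map phi TAP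
noncomputable def SE : ℂ⟦X⟧ := PowerSeries.map phi SEP

lemma hDTA : DC TA = 1 + TA * TA := by
  rw [TA, map_D, key1, map_add, map_one, map_mul]

lemma hDSE : DC SE = TA * SE := by
  rw [SE, map_D, key2, map_mul]
  rfl

noncomputable def ea : ℂ⟦X⟧ := PowerSeries.rescale Complex.I (PowerSeries.exp ℂ)
noncomputable def eb : ℂ⟦X⟧ := PowerSeries.rescale (-Complex.I) (PowerSeries.exp ℂ)
noncomputable def jj : ℂ⟦X⟧ := PowerSeries.C Complex.I

lemma coeff_ea (n : ℕ) : PowerSeries.coeff n ea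
    = Complex.I ^ n * algebraMap ℚ ℂ (1 / Nat.factorial n) := by
  rw [ea, PowerSeries.coeff_rescale, PowerSeries.coeff_exp]

lemma coeff_eb (n : ℕ) : PowerSeries.coeff n eb
    = (-Complex.I) ^ n * algebraMap ℚ ℂ (1 / Nat.factorial n) := by
  rw [eb, PowerSeries.coeff_rescale, PowerSeries.coeff_exp]

lemma fact_step (n : ℕ) : (algebraMap ℚ ℂ) (1 / Nat.factorial (n+1)) * ((n:ℂ)+1)
    = algebraMap ℚ ℂ (1 / Nat.factorial n) := by
  have h : ((n:ℂ)+1) = algebraMap ℚ ℂ ((n:ℚ)+1) := by push_cast; simp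
  rw [h, ← map_mul]
  congr 1
  rw [one_div, one_div, fact_inv_mul]

lemma hDea : DC ea = jj * ea := by
  apply PowerSeries.ext; intro n
  rw [PowerSeries.coeff_derivative, coeff_ea, jj, PowerSeries.coeff_C_mul, coeff_ea,
    pow_succ]
  rw [mul_assoc, mul_assoc]
  rw [fact_step]
  ring

lemma hDeb : DC eb = -(jj * eb) := by
  apply PowerSeries.ext; intro n
  rw [PowerSeries.coeff_derivative, coeff_eb, map_neg, jj, PowerSeries.coeff_C_mul,
    coeff_eb, pow_succ]
  rw [mul_assoc, mul_assoc, fact_step]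
  ring

lemma hab : ea * eb = 1 := by
  rw [ea, eb, PowerSeries.exp_mul_exp_eq_exp_add]
  simp [PowerSeries.rescale_zero]

lemma hjj : jj * jj = -1 := by
  rw [jj, ← map_mul, Complex.I_mul_I, map_neg, map_one]

lemma hrea : PowerSeries.rescale 2 ea = ea * ea := by
  rw [ea, PowerSeries.rescale_rescale, PowerSeries.exp_mul_exp_eq_exp_add]
  congr 1
  ring

lemma hreb : PowerSeries.rescale 2 eb = eb * eb := by
  rw [eb, PowerSeries.rescale_rescale, PowerSeries.exp_mul_exp_eq_exp_add]
  congr 1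
  ring

lemma rescale_C' (c : ℂ) : PowerSeries.rescale 2 (PowerSeries.C c) = PowerSeries.C c := by
  apply PowerSeries.ext; intro n
  rcases n with _ | n <;> simp [PowerSeries.coeff_rescale, PowerSeries.coeff_C]

noncomputable def U : ℂ⟦X⟧ := TA * (ea + eb) + jj * (ea - eb)

lemma hDU : DC U = TA * U := by
  rw [U, D_add, D_mul, D_mul, D_add, D_sub, hDea, hDeb, hDTA]
  rw [show DC jj = 0 from D_C _]
  have := hjj
  linear_combination (ea + eb) * hjj

lemma coeff0_TA : PowerSeries.coeff 0 TA = 0 := by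
  rw [TA, PowerSeries.coeff_map, TAP, PowerSeries.coeff_mk]
  show phi (Polynomial.C ((Nat.factorial 0 : ℚ))⁻¹ * X) = 0
  simp [phi]

lemma coeff0_SE : PowerSeries.coeff 0 SE = 1 := by
  rw [SE, PowerSeries.coeff_map, SEP, PowerSeries.coeff_mk]
  show phi (Polynomial.C ((Nat.factorial 0 : ℚ))⁻¹ * Q 0) = 1
  show phi (Polynomial.C ((Nat.factorial 0 : ℚ))⁻¹ * 1) = 1
  simp [phi]

lemma hU : U = 0 := by
  apply PowerSeries.ext; intro n
  rw [map_zero]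
  induction n using Nat.strong_induction_on with
  | _ n ih =>
    match n with
    | 0 =>
      have h1 : PowerSeries.coeff 0 (ea + eb) = 2 := by
        rw [map_add, coeff_ea, coeff_eb]; norm_num
      have h2 : PowerSeries.coeff 0 (ea - eb) = 0 := by
        rw [map_sub, coeff_ea, coeff_eb]; norm_num
      rw [U, map_add, PowerSeries.coeff_mul, PowerSeries.coeff_mul,
        Finset.Nat.antidiagonal_zero, Finset.sum_singleton, Finset.sum_singleton,
        coeff0_TA, h1, h2, zero_mul, mul_zero, add_zero]
    | (n+1) =>
      have h := congrArg (PowerSeries.coeff n) hDU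
      rw [PowerSeries.coeff_derivative, PowerSeries.coeff_mul] at h
      have hz : ∑ p ∈ Finset.HasAntidiagonal.antidiagonal n,
          PowerSeries.coeff p.1 TA * PowerSeries.coeff p.2 U = 0 := by
        apply Finset.sum_eq_zero
        intro p hp
        have : p.2 ≤ n := Finset.HasAntidiagonal.antidiagonal.snd_le hp
        rw [ih p.2 (by omega), mul_zero]
      rw [hz] at h
      have hne : ((n:ℂ)+1) ≠ 0 := by
        have : ((n+1 : ℕ) : ℂ) ≠ 0 := Nat.cast_ne_zero.mpr (Nat.succ_ne_zero n)
        push_cast at this; exact this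
      rcases mul_eq_zero.mp h with h' | h'
      · exact h'
      · exact absurd h' hne

lemma hV : SE * (ea + eb) = 2 := by
  have hDV : DC (SE * (ea + eb) - 2) = 0 := by
    rw [D_sub, D_mul, D_add, hDea, hDeb, hDSE]
    rw [show (2 : ℂ⟦X⟧) = PowerSeries.C 2 by rw [map_ofNat], D_C]
    have h := hU
    rw [U] at h
    linear_combination SE * h
  have hcoeff : ∀ n, PowerSeries.coeff n (SE * (ea + eb) - 2) = 0 := by
    intro n
    match n with
    | 0 =>
      rw [map_sub, PowerSeries.coeff_mul, Finset.Nat.antidiagonal_zero,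
        Finset.sum_singleton]
      rw [map_add, coeff0_SE, coeff_ea, coeff_eb]
      rw [show (2 : ℂ⟦X⟧) = PowerSeries.C 2 by rw [map_ofNat], PowerSeries.coeff_C]
      simp
      norm_num
    | (n+1) =>
      have h := congrArg (PowerSeries.coeff n) hDV
      rw [PowerSeries.coeff_derivative, map_zero] at h
      have hne : ((n:ℂ)+1) ≠ 0 := by
        have : ((n+1 : ℕ) : ℂ) ≠ 0 := Nat.cast_ne_zero.mpr (Nat.succ_ne_zero n)
        push_cast at this; exact this
      rcases mul_eq_zero.mp h with h' | h'
      · exact h'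
      · exact absurd h' hne
  apply PowerSeries.ext; intro n
  have := hcoeff n
  rwa [map_sub, sub_eq_zero] at this

lemma Mmain : (PowerSeries.rescale 2 SE + PowerSeries.rescale 2 TA) *
      ((ea + eb) + jj * (ea - eb)) = (ea + eb) - jj * (ea - eb) := by
  have h2 : PowerSeries.rescale 2 SE * (ea*ea + eb*eb) = 2 := by
    have := congrArg (PowerSeries.rescale (2:ℂ)) hV
    rw [map_mul, map_add, hrea, hreb, map_ofNat] at this
    exact this
  have h3 : PowerSeries.rescale 2 TA * (ea*ea + eb*eb) + jj * (ea*ea - eb*eb) = 0 := by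
    have := congrArg (PowerSeries.rescale (2:ℂ)) hU
    rw [U, map_add, map_mul, map_mul, map_add, map_sub, hrea, hreb, map_zero] at this
    rw [show PowerSeries.rescale (2:ℂ) jj = jj from rescale_C' _] at this
    exact this
  have hne : (ea*ea + eb*eb : ℂ⟦X⟧) ≠ 0 := by
    intro h
    have := congrArg (PowerSeries.constantCoeff) h
    rw [map_add, map_mul, map_mul, map_zero] at this
    have h1 : PowerSeries.constantCoeff ea = 1 := by
      rw [← PowerSeries.coeff_zero_eq_constantCoeff_apply, coeff_ea]; simp
    have h2 : PowerSeries.constantCoeff eb = 1 := by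
      rw [← PowerSeries.coeff_zero_eq_constantCoeff_apply, coeff_eb]; simp
    rw [h1, h2] at this
    norm_num at this
  apply mul_right_cancel₀ hne
  linear_combination ((ea+eb) + jj*(ea-eb)) * h2 + ((ea+eb) + jj*(ea-eb)) * h3
    + (-2*((ea+eb) + jj*(ea-eb))) * hab
    + (-(ea^3 - ea^2*eb - ea*eb^2 + eb^3)) * hjj


-- ===================== coefficient extraction =====================

lemma phi_apply (c : ℚ) (p : R) : phi (Polynomial.C c * p)
    = algebraMap ℚ ℂ (c * p.eval 0) := by
  simp [phi]

lemma coeff_F (i : ℕ) :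
    PowerSeries.coeff i (PowerSeries.rescale 2 SE + PowerSeries.rescale 2 TA)
      = algebraMap ℚ ℂ ((2:ℚ)^i * ((i.factorial : ℚ))⁻¹ * E i) := by
  rw [map_add, PowerSeries.coeff_rescale, PowerSeries.coeff_rescale, TA, SE,
    PowerSeries.coeff_map, PowerSeries.coeff_map, TAP, SEP, PowerSeries.coeff_mk,
    PowerSeries.coeff_mk, phi_apply, phi_apply]
  have hQP : (Q i).eval 0 + (P i).eval 0 = E i := by
    rcases Nat.even_or_odd i with h | h
    · rw [E, if_pos h, P_eval0_even h, add_zero]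
    · rw [E, if_neg (Nat.not_even_iff_odd.mpr h), Q_eval0_odd h, zero_add]
  have h2 : (2:ℂ)^i = algebraMap ℚ ℂ ((2:ℚ)^i) := by
    rw [map_pow, map_ofNat]
  rw [h2, ← map_mul, ← map_mul, ← map_add]
  congr 1
  rw [← hQP]
  ring

lemma coeff_G_even (k : ℕ) :
    PowerSeries.coeff (2*k) ((ea + eb) + jj * (ea - eb))
      = algebraMap ℚ ℂ (2 * (-1:ℚ)^k * (((2*k).factorial : ℚ))⁻¹) := by
  rw [map_add, map_add, jj, PowerSeries.coeff_C_mul, map_sub, coeff_ea, coeff_eb]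
  have h1 : (Complex.I)^(2*k) = (-1:ℂ)^k := by rw [pow_mul, Complex.I_sq]
  have h2 : (-Complex.I)^(2*k) = (-1:ℂ)^k := by rw [pow_mul, neg_sq, Complex.I_sq]
  rw [h1, h2]
  simp only [one_div, map_mul, map_neg, map_pow, map_one, map_ofNat]
  ring

lemma coeff_G_odd (k : ℕ) :
    PowerSeries.coeff (2*k+1) ((ea + eb) + jj * (ea - eb))
      = algebraMap ℚ ℂ ((-2) * (-1:ℚ)^k * (((2*k+1).factorial : ℚ))⁻¹) := by
  rw [map_add, map_add, jj, PowerSeries.coeff_C_mul, map_sub, coeff_ea, coeff_eb]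
  have h1 : (Complex.I)^(2*k+1) = (-1:ℂ)^k * Complex.I := by
    rw [pow_succ, pow_mul, Complex.I_sq]
  have h2 : (-Complex.I)^(2*k+1) = -((-1:ℂ)^k * Complex.I) := by
    rw [pow_succ, pow_mul, neg_sq, Complex.I_sq]
    ring
  rw [h1, h2]
  simp only [one_div, map_mul, map_neg, map_pow, map_one, map_ofNat]
  linear_combination (2*(-1:ℂ)^k * (algebraMap ℚ ℂ ((((2*k+1).factorial : ℚ))⁻¹)))
    * Complex.I_sq

lemma coeff_RHS (m : ℕ) :
    PowerSeries.coeff (2*m+1) ((ea + eb) - jj * (ea - eb))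
      = algebraMap ℚ ℂ (2 * (-1:ℚ)^m * (((2*m+1).factorial : ℚ))⁻¹) := by
  rw [map_sub, map_add, jj, PowerSeries.coeff_C_mul, map_sub, coeff_ea, coeff_eb]
  have h1 : (Complex.I)^(2*m+1) = (-1:ℂ)^m * Complex.I := by
    rw [pow_succ, pow_mul, Complex.I_sq]
  have h2 : (-Complex.I)^(2*m+1) = -((-1:ℂ)^m * Complex.I) := by
    rw [pow_succ, pow_mul, neg_sq, Complex.I_sq]
    ring
  rw [h1, h2]
  simp only [one_div, map_mul, map_neg, map_pow, map_one, map_ofNat]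
  linear_combination ((-2)*(-1:ℂ)^m * (algebraMap ℚ ℂ ((((2*m+1).factorial : ℚ))⁻¹)))
    * Complex.I_sq

lemma sum_split (f : ℕ → ℂ) (m : ℕ) :
    ∑ i ∈ Finset.range (2*m+2), f i
      = (∑ k ∈ Finset.range (m+1), f (2*k)) + ∑ k ∈ Finset.range (m+1), f (2*k+1) := by
  induction m with
  | zero => simp [Finset.sum_range_succ]
  | succ m ih =>
    have h1 : 2*(m+1)+2 = (2*m+2)+1+1 := by ring
    rw [h1, Finset.sum_range_succ, Finset.sum_range_succ, ih,
      Finset.sum_range_succ (fun k => f (2*k)) (m+1),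
      Finset.sum_range_succ (fun k => f (2*k+1)) (m+1)]
    have e1 : 2*(m+1) = 2*m+2 := by omega
    rw [e1]
    have e3 : 2*m+2+1 = 2*m+3 := by omega
    rw [e3]
    ring

lemma fact_binom (a b : ℕ) :
    ((a.factorial : ℚ))⁻¹ * ((b.factorial : ℚ))⁻¹
      = ((a+b).choose b : ℚ) * (((a+b).factorial : ℚ))⁻¹ := by
  have h := Nat.choose_mul_factorial_mul_factorial (Nat.le_add_left b a)
  have h2 : (a+b).choose b * (b.factorial) * (a.factorial) = (a+b).factorial := by
    simpa [Nat.add_sub_cancel] using h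
  have h3 : ((a+b).choose b : ℚ) * (b.factorial : ℚ) * (a.factorial : ℚ)
      = ((a+b).factorial : ℚ) := by exact_mod_cast congrArg (Nat.cast : ℕ → ℚ) h2
  have ha : (a.factorial : ℚ) ≠ 0 := Nat.cast_ne_zero.mpr (Nat.factorial_ne_zero a)
  have hb : (b.factorial : ℚ) ≠ 0 := Nat.cast_ne_zero.mpr (Nat.factorial_ne_zero b)
  have hab : (((a+b).factorial : ℚ)) ≠ 0 := Nat.cast_ne_zero.mpr (Nat.factorial_ne_zero _)
  rw [Nat.cast_choose ℚ (Nat.le_add_left b a), Nat.add_sub_cancel]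
  field_simp

theorem euler_odd_even_alternating_identity (m : ℕ) :
    (∑ k ∈ Finset.range (m + 1),
        ((2 * m + 1).choose (2 * k + 1) : ℚ) * (-1) ^ k * 2 ^ (2 * m - 2 * k) *
          E (2 * m - 2 * k)) -
      (∑ k ∈ Finset.range (m + 1),
        ((2 * m + 1).choose (2 * k) : ℚ) * (-1) ^ k * 2 ^ (2 * m - 2 * k + 1) *
          E (2 * m - 2 * k + 1)) =
    (-1) ^ (m + 1) := by
  set c : ℚ := (((2*m+1).factorial : ℚ))⁻¹ with hc
  have hcne : c ≠ 0 := inv_ne_zero (Nat.cast_ne_zero.mpr (Nat.factorial_ne_zero _))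
  -- coefficient of the main identity
  have hM := congrArg (PowerSeries.coeff (2*m+1)) Mmain
  rw [PowerSeries.coeff_mul, Finset.Nat.sum_antidiagonal_eq_sum_range_succ_mk,
    coeff_RHS] at hM
  have hM2 : (∑ i ∈ Finset.range (2*m+2),
      (PowerSeries.coeff i (PowerSeries.rescale 2 SE + PowerSeries.rescale 2 TA)) *
        (PowerSeries.coeff (2*m+1-i) ((ea + eb) + jj * (ea - eb))))
      = algebraMap ℚ ℂ (2 * (-1:ℚ)^m * (((2*m+1).factorial : ℚ))⁻¹) := hM
  -- rewrite each term as algebraMap of a rational number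
  have heven : ∀ k ∈ Finset.range (m+1),
      (PowerSeries.coeff (2*k)
          (PowerSeries.rescale 2 SE + PowerSeries.rescale 2 TA)) *
        (PowerSeries.coeff (2*m+1-2*k) ((ea + eb) + jj * (ea - eb)))
      = algebraMap ℚ ℂ ((-2) * c *
          (((2*m+1).choose (2*(m-k)+1) : ℚ) * (-1)^(m-k) * 2^(2*m-2*(m-k)) *
            E (2*m-2*(m-k)))) := by
    intro k hk
    have hkm : k ≤ m := by
      have := Finset.mem_range.mp hk; omega
    have h1 : 2*m+1-2*k = 2*(m-k)+1 := by omega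
    rw [h1, coeff_F, coeff_G_odd, ← map_mul]
    congr 1
    have h2 : 2*m-2*(m-k) = 2*k := by omega
    rw [h2]
    have hb := fact_binom (2*k) (2*(m-k)+1)
    have h3 : 2*k + (2*(m-k)+1) = 2*m+1 := by omega
    rw [h3] at hb
    rw [hc]
    linear_combination ((-2)*(-1:ℚ)^(m-k)*2^(2*k)*E (2*k)) * hb
  have hodd : ∀ k ∈ Finset.range (m+1),
      (PowerSeries.coeff (2*k+1)
          (PowerSeries.rescale 2 SE + PowerSeries.rescale 2 TA)) *
        (PowerSeries.coeff (2*m+1-(2*k+1)) ((ea + eb) + jj * (ea - eb)))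
      = algebraMap ℚ ℂ (2 * c *
          (((2*m+1).choose (2*(m-k)) : ℚ) * (-1)^(m-k) * 2^(2*m-2*(m-k)+1) *
            E (2*m-2*(m-k)+1))) := by
    intro k hk
    have hkm : k ≤ m := by
      have := Finset.mem_range.mp hk; omega
    have h1 : 2*m+1-(2*k+1) = 2*(m-k) := by omega
    rw [h1, coeff_F, coeff_G_even, ← map_mul]
    congr 1
    have h2 : 2*m-2*(m-k) = 2*k := by omega
    rw [h2]
    have hb := fact_binom (2*k+1) (2*(m-k))
    have h3 : 2*k+1 + 2*(m-k) = 2*m+1 := by omega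
    rw [h3] at hb
    rw [hc]
    linear_combination (2*(-1:ℚ)^(m-k)*2^(2*k+1)*E (2*k+1)) * hb
  have hsplit2 : (∑ i ∈ Finset.range (2*m+2),
      (PowerSeries.coeff i (PowerSeries.rescale 2 SE + PowerSeries.rescale 2 TA)) *
        (PowerSeries.coeff (2*m+1-i) ((ea + eb) + jj * (ea - eb))))
      = (∑ k ∈ Finset.range (m+1),
          (PowerSeries.coeff (2*k)
              (PowerSeries.rescale 2 SE + PowerSeries.rescale 2 TA)) *
            (PowerSeries.coeff (2*m+1-2*k) ((ea + eb) + jj * (ea - eb))))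
        + ∑ k ∈ Finset.range (m+1),
          (PowerSeries.coeff (2*k+1)
              (PowerSeries.rescale 2 SE + PowerSeries.rescale 2 TA)) *
            (PowerSeries.coeff (2*m+1-(2*k+1)) ((ea + eb) + jj * (ea - eb))) :=
    sum_split (fun i =>
      (PowerSeries.coeff i (PowerSeries.rescale 2 SE + PowerSeries.rescale 2 TA)) *
        (PowerSeries.coeff (2*m+1-i) ((ea + eb) + jj * (ea - eb)))) m
  have HC := hsplit2.symm.trans hM2
  rw [Finset.sum_congr rfl heven, Finset.sum_congr rfl hodd] at HC
  rw [← map_sum, ← map_sum, ← map_add] at HC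
  have HQ := (algebraMap ℚ ℂ).injective HC
  -- reflect the sums
  have r1 : (∑ k ∈ Finset.range (m+1), ((-2) * c *
          (((2*m+1).choose (2*(m-k)+1) : ℚ) * (-1)^(m-k) * 2^(2*m-2*(m-k)) *
            E (2*m-2*(m-k)))))
      = (-2) * c * ∑ k ∈ Finset.range (m+1),
          (((2*m+1).choose (2*k+1) : ℚ) * (-1)^k * 2^(2*m-2*k) * E (2*m-2*k)) := by
    rw [Finset.mul_sum]
    have := Finset.sum_range_reflect (fun j =>
      (-2) * c * (((2*m+1).choose (2*j+1) : ℚ) * (-1)^j * 2^(2*m-2*j) * E (2*m-2*j))) (m+1)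
    simpa [Nat.add_sub_cancel] using this
  have r2 : (∑ k ∈ Finset.range (m+1), (2 * c *
          (((2*m+1).choose (2*(m-k)) : ℚ) * (-1)^(m-k) * 2^(2*m-2*(m-k)+1) *
            E (2*m-2*(m-k)+1))))
      = 2 * c * ∑ k ∈ Finset.range (m+1),
          (((2*m+1).choose (2*k) : ℚ) * (-1)^k * 2^(2*m-2*k+1) * E (2*m-2*k+1)) := by
    rw [Finset.mul_sum]
    have := Finset.sum_range_reflect (fun j =>
      2 * c * (((2*m+1).choose (2*j) : ℚ) * (-1)^j * 2^(2*m-2*j+1) * E (2*m-2*j+1))) (m+1)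
    simpa [Nat.add_sub_cancel] using this
  rw [r1, r2] at HQ
  have hne : ((-2) * c : ℚ) ≠ 0 := by
    intro h
    rcases mul_eq_zero.mp h with h' | h'
    · norm_num at h'
    · exact hcne h'
  apply mul_left_cancel₀ hne
  linear_combination HQ
end

section
/- For every integer n ≥ 0, (2n+2) · 2^{2n+1} · E_{2n+1} = s_{2n+2} + Σ_{i=0}^{n} C(2n+2, 2i+2) (-1)^{i+2} (4^{i+1} − 2) B_{2i+2} s_{2n-2i} − (-4)^{n+1} B_{2n+2}, where C(m,j) denotes the binomial coefficient and B_j denotes the j-th Bernoulli number. -/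
open Polynomial Finset

/-- The Springer numbers `s n = Q n (1)`. -/
noncomputable def s (n : ℕ) : ℚ := (Q n).eval 1

lemma aux_pascal (n : ℕ) (A : ℕ → Polynomial ℚ) :
    ∑ j ∈ range (n + 2), ((n+1).choose j) • A j =
      (∑ k ∈ range (n + 1), (n.choose k) • A (k+1)) +
        ∑ j ∈ range (n + 1), (n.choose j) • A j := by
  rw [Finset.sum_range_succ' (fun j => ((n+1).choose j) • A j)]
  simp only [Nat.choose_succ_succ, add_smul, Finset.sum_add_distrib, Nat.choose_zero_right,
    one_smul]
  have h2 : ∑ k ∈ range (n + 1), (n.choose (k+1)) • A (k+1) + A 0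
      = ∑ j ∈ range (n + 2), (n.choose j) • A j := by
    rw [Finset.sum_range_succ' (fun j => (n.choose j) • A j)]
    simp
  have h1 : ∑ j ∈ range (n + 2), (n.choose j) • A j
      = ∑ j ∈ range (n + 1), (n.choose j) • A j := by
    rw [Finset.sum_range_succ, Nat.choose_succ_self, zero_smul, add_zero]
  rw [add_assoc, h2, h1]

lemma P_conv (n : ℕ) :
    P (n + 1) = (if n = 0 then 1 else 0) +
      ∑ k ∈ range (n + 1), (n.choose k) • (P k * P (n - k)) := by
  induction n with
  | zero =>
    show (1 + X ^ 2) * derivative X = _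
    simp [P]
    ring
  | succ n ih =>
    have hder : derivative (P (n+1)) =
        ∑ k ∈ range (n + 1), (n.choose k) •
          (derivative (P k) * P (n-k) + P k * derivative (P (n-k))) := by
      rw [ih, derivative_add, derivative_sum]
      have : derivative (if n = 0 then (1 : Polynomial ℚ) else 0) = 0 := by
        split <;> simp
      rw [this, zero_add]
      refine Finset.sum_congr rfl fun k hk => ?_
      rw [derivative_smul, derivative_mul]
    have hstep : P (n + 2) =
        ∑ k ∈ range (n + 1), (n.choose k) •
          (P (k+1) * P (n-k) + P k * P (n-k+1)) := by
      show (1 + X ^ 2) * derivative (P (n+1)) = _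
      rw [hder, Finset.mul_sum]
      refine Finset.sum_congr rfl fun k hk => ?_
      rw [mul_smul_comm]
      congr 1
      have h1 : P (k+1) = (1 + X ^ 2) * derivative (P k) := rfl
      have h2 : P (n-k+1) = (1 + X ^ 2) * derivative (P (n-k)) := rfl
      rw [h1, h2]
      ring
    rw [hstep, if_neg (Nat.succ_ne_zero n), zero_add]
    have := aux_pascal n (fun j => P j * P (n + 1 - j))
    simp only [smul_add, Finset.sum_add_distrib]
    rw [this]
    congr 1
    · refine Finset.sum_congr rfl fun k hk => ?_
      have hkn : k ≤ n := Nat.le_of_lt_succ (Finset.mem_range.mp hk)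
      congr 3
      omega
    · refine Finset.sum_congr rfl fun k hk => ?_
      have hkn : k ≤ n := Nat.le_of_lt_succ (Finset.mem_range.mp hk)
      congr 3
      omega

lemma Q_conv (n : ℕ) :
    Q (n + 1) = ∑ k ∈ range (n + 1), (n.choose k) • (Q k * P (n - k)) := by
  induction n with
  | zero =>
    show (1 + X ^ 2) * derivative (Q 0) + X * Q 0 = _
    simp [Q, P]
  | succ n ih =>
    have hQP : ∀ k, (1 + X ^ 2) * derivative (Q k) = Q (k+1) - X * Q k := by
      intro k
      show _ = (1 + X ^ 2) * derivative (Q k) + X * Q k - X * Q k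
      ring
    have hder : derivative (Q (n+1)) =
        ∑ k ∈ range (n + 1), (n.choose k) •
          (derivative (Q k) * P (n-k) + Q k * derivative (P (n-k))) := by
      rw [ih, derivative_sum]
      refine Finset.sum_congr rfl fun k hk => ?_
      rw [derivative_smul, derivative_mul]
    have hstep : Q (n + 2) =
        ∑ k ∈ range (n + 1), (n.choose k) •
          (Q (k+1) * P (n-k) + Q k * P (n-k+1)) := by
      show (1 + X ^ 2) * derivative (Q (n+1)) + X * Q (n+1) = _
      rw [hder, ih, Finset.mul_sum, Finset.mul_sum, ← Finset.sum_add_distrib]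
      refine Finset.sum_congr rfl fun k hk => ?_
      rw [mul_smul_comm, mul_smul_comm, ← smul_add]
      congr 1
      rw [mul_add]
      have h1 : (1 + X ^ 2) * (derivative (Q k) * P (n - k)) =
          ((1 + X ^ 2) * derivative (Q k)) * P (n-k) := by ring
      have h2 : (1 + X ^ 2) * (Q k * derivative (P (n - k))) =
          Q k * ((1 + X ^ 2) * derivative (P (n-k))) := by ring
      rw [h1, h2, hQP]
      have : (1 + X ^ 2) * derivative (P (n - k)) = P (n - k + 1) := rfl
      rw [this]
      ring
    rw [hstep]
    have := aux_pascal n (fun j => Q j * P (n + 1 - j))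
    simp only [smul_add, Finset.sum_add_distrib]
    rw [this]
    congr 1
    · refine Finset.sum_congr rfl fun k hk => ?_
      have hkn : k ≤ n := Nat.le_of_lt_succ (Finset.mem_range.mp hk)
      congr 3
      omega
    · refine Finset.sum_congr rfl fun k hk => ?_
      have hkn : k ≤ n := Nat.le_of_lt_succ (Finset.mem_range.mp hk)
      congr 3
      omega

/-- tangent numbers -/
noncomputable def tg (n : ℕ) : ℚ := (P n).eval 0
/-- `P n` evaluated at 1 -/
noncomputable def pg (n : ℕ) : ℚ := (P n).eval 1

lemma tg_succ (n : ℕ) : tg (n + 1) =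
    (if n = 0 then 1 else 0) + ∑ k ∈ range (n + 1), (n.choose k : ℚ) * (tg k * tg (n - k)) := by
  unfold tg
  rw [P_conv, eval_add, eval_finset_sum]
  congr 1
  · split <;> simp
  · refine Finset.sum_congr rfl fun k hk => ?_
    rw [eval_smul, eval_mul]
    simp [nsmul_eq_mul]

lemma pg_succ (n : ℕ) : pg (n + 1) =
    (if n = 0 then 1 else 0) + ∑ k ∈ range (n + 1), (n.choose k : ℚ) * (pg k * pg (n - k)) := by
  unfold pg
  rw [P_conv, eval_add, eval_finset_sum]
  congr 1
  · split <;> simp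
  · refine Finset.sum_congr rfl fun k hk => ?_
    rw [eval_smul, eval_mul]
    simp [nsmul_eq_mul]

lemma s_succ (n : ℕ) : s (n + 1) =
    ∑ k ∈ range (n + 1), (n.choose k : ℚ) * (s k * pg (n - k)) := by
  unfold s
  rw [Q_conv, eval_finset_sum]
  refine Finset.sum_congr rfl fun k hk => ?_
  rw [eval_smul, eval_mul]
  simp [nsmul_eq_mul, s, pg]

lemma tg_zero : tg 0 = 0 := by simp [tg, P]
lemma pg_zero : pg 0 = 1 := by simp [pg, P]
lemma s_zero : s 0 = 1 := by simp [s, Q]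

/-- EGF of the tangent numbers. -/
noncomputable def Ts : PowerSeries ℚ := PowerSeries.mk fun n => tg n / (n.factorial)
/-- EGF of `pg`. -/
noncomputable def Gs : PowerSeries ℚ := PowerSeries.mk fun n => pg n / (n.factorial)
/-- EGF of the Springer numbers. -/
noncomputable def Ss : PowerSeries ℚ := PowerSeries.mk fun n => s n / (n.factorial)

lemma aux_div_fact (n : ℕ) (x : ℚ) : x / ((n+1).factorial) * (n+1) = x / (n.factorial) := by
  rw [Nat.factorial_succ]
  have h1 : ((n:ℚ)+1) ≠ 0 := by positivity
  have h2 : (((n.factorial):ℚ)) ≠ 0 := by exact_mod_cast n.factorial_ne_zero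
  push_cast
  field_simp

lemma aux_conv_div (n : ℕ) (u v : ℕ → ℚ) :
    (∑ k ∈ range (n + 1), (n.choose k : ℚ) * (u k * v (n - k))) / (n.factorial) =
      ∑ p ∈ Finset.HasAntidiagonal.antidiagonal n, u p.1 / (p.1.factorial) * (v p.2 / (p.2.factorial)) := by
  rw [Finset.Nat.sum_antidiagonal_eq_sum_range_succ_mk, Finset.sum_div]
  refine Finset.sum_congr rfl fun k hk => ?_
  have hkn : k ≤ n := Nat.le_of_lt_succ (Finset.mem_range.mp hk)
  rw [Nat.cast_choose ℚ hkn]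
  have h1 : ((k.factorial:ℚ)) ≠ 0 := by exact_mod_cast k.factorial_ne_zero
  have h2 : (((n-k).factorial:ℚ)) ≠ 0 := by exact_mod_cast (n-k).factorial_ne_zero
  have h3 : (((n.factorial):ℚ)) ≠ 0 := by exact_mod_cast n.factorial_ne_zero
  field_simp

lemma Ts_ode : PowerSeries.derivative ℚ Ts = 1 + Ts * Ts := by
  ext n
  rw [PowerSeries.coeff_derivative, map_add, PowerSeries.coeff_mul]
  simp only [Ts, PowerSeries.coeff_mk]
  rw [aux_div_fact, tg_succ, add_div, aux_conv_div]
  congr 1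
  rw [PowerSeries.coeff_one]
  split <;> simp_all
lemma Gs_ode : PowerSeries.derivative ℚ Gs = 1 + Gs * Gs := by
  ext n
  rw [PowerSeries.coeff_derivative, map_add, PowerSeries.coeff_mul]
  simp only [Gs, PowerSeries.coeff_mk]
  rw [aux_div_fact, pg_succ, add_div, aux_conv_div]
  congr 1
  rw [PowerSeries.coeff_one]
  split <;> simp_all
lemma Ss_ode : PowerSeries.derivative ℚ Ss = Ss * Gs := by
  ext n
  rw [PowerSeries.coeff_derivative, PowerSeries.coeff_mul]
  simp only [Ss, Gs, PowerSeries.coeff_mk]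
  rw [aux_div_fact, s_succ, aux_conv_div]

lemma Ts_const : PowerSeries.constantCoeff Ts = 0 := by
  simp [Ts, ← PowerSeries.coeff_zero_eq_constantCoeff_apply, tg_zero]
lemma Gs_const : PowerSeries.constantCoeff Gs = 1 := by
  simp [Gs, ← PowerSeries.coeff_zero_eq_constantCoeff_apply, pg_zero]
lemma Ss_const : PowerSeries.constantCoeff Ss = 1 := by
  simp [Ss, ← PowerSeries.coeff_zero_eq_constantCoeff_apply, s_zero]


-- uniqueness lemma
lemma ode_zero (F G : PowerSeries ℚ) (h : PowerSeries.derivative ℚ F = G * F)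
    (h0 : PowerSeries.constantCoeff F = 0) : F = 0 := by
  have key : ∀ n, PowerSeries.coeff n F = 0 := by
    intro n
    induction n using Nat.strong_induction_on with
    | _ n ih =>
      match n with
      | 0 => rw [PowerSeries.coeff_zero_eq_constantCoeff]; exact h0
      | (m+1) =>
        have hc := congrArg (PowerSeries.coeff m) h
        rw [PowerSeries.coeff_derivative, PowerSeries.coeff_mul] at hc
        have hz : ∑ p ∈ Finset.HasAntidiagonal.antidiagonal m,
            PowerSeries.coeff p.1 G * PowerSeries.coeff p.2 F = 0 := by
          refine Finset.sum_eq_zero fun p hp => ?_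
          have hp2 : p.2 ≤ m := by
            have := Finset.HasAntidiagonal.mem_antidiagonal.mp hp
            omega
          rw [ih p.2 (Nat.lt_succ_of_le hp2), mul_zero]
        rw [hz] at hc
        have hm : ((m:ℚ) + 1) ≠ 0 := by positivity
        exact (mul_eq_zero.mp hc).resolve_right hm
  ext n
  simp [key n]

-- derivatives of sin and cos
lemma sin_deriv : PowerSeries.derivative ℚ (PowerSeries.sin ℚ) = PowerSeries.cos ℚ := by
  ext n
  rw [PowerSeries.coeff_derivative]
  simp only [PowerSeries.sin, PowerSeries.cos, PowerSeries.coeff_mk, Algebra.algebraMap_self,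
    RingHom.id_apply]
  rcases Nat.even_or_odd n with he | ho
  · rw [if_pos he, if_neg (by simpa [Nat.even_add_one] using he)]
    obtain ⟨m, rfl⟩ := he
    have h1 : (m + m + 1) / 2 = m := by omega
    have h2 : (m + m) / 2 = m := by omega
    rw [h1, h2, Nat.factorial_succ]
    have h3 : ((m+m:ℕ):ℚ) + 1 ≠ 0 := by positivity
    have h4 : (((m+m).factorial :ℕ):ℚ) ≠ 0 := by exact_mod_cast (m+m).factorial_ne_zero
    push_cast
    field_simp
  · have hne : ¬ Even n := Nat.not_even_iff_odd.mpr ho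
    rw [if_pos (Nat.even_add_one.mpr hne), if_neg hne]
    simp

lemma cos_deriv : PowerSeries.derivative ℚ (PowerSeries.cos ℚ) = -PowerSeries.sin ℚ := by
  ext n
  rw [PowerSeries.coeff_derivative, map_neg]
  simp only [PowerSeries.sin, PowerSeries.cos, PowerSeries.coeff_mk, Algebra.algebraMap_self,
    RingHom.id_apply]
  rcases Nat.even_or_odd n with he | ho
  · have h5 : ¬ Even (n+1) := by simp [Nat.even_add_one, he]
    rw [if_neg h5, if_pos he]
    simp
  · have hne : ¬ Even n := Nat.not_even_iff_odd.mpr ho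
    rw [if_pos (Nat.even_add_one.mpr hne), if_neg hne]
    obtain ⟨m, rfl⟩ := ho
    have h1 : (2*m + 1 + 1) / 2 = m + 1 := by omega
    have h2 : (2*m + 1) / 2 = m := by omega
    rw [h1, h2, Nat.factorial_succ]
    have h3 : ((2*m+1:ℕ):ℚ) + 1 ≠ 0 := by positivity
    have h4 : (((2*m+1).factorial :ℕ):ℚ) ≠ 0 := by exact_mod_cast (2*m+1).factorial_ne_zero
    push_cast
    field_simp
    ring

lemma sin_const : PowerSeries.constantCoeff (PowerSeries.sin ℚ) = 0 := by
  rw [← PowerSeries.coeff_zero_eq_constantCoeff_apply]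
  simp [PowerSeries.sin]
lemma cos_const : PowerSeries.constantCoeff (PowerSeries.cos ℚ) = 1 := by
  rw [← PowerSeries.coeff_zero_eq_constantCoeff_apply]
  simp [PowerSeries.cos]

open PowerSeries in
example : True := trivial
section PSopen
open PowerSeries

noncomputable def cot1 : PowerSeries ℚ :=
  PowerSeries.mk fun n =>
    if Even n then (-4)^(n/2) * _root_.bernoulli n / n.factorial else 0

noncomputable def csc1 : PowerSeries ℚ :=
  PowerSeries.mk fun n =>
    if Even n then (-1)^(n/2+1) * (4^(n/2) - 2) * _root_.bernoulli n / n.factorial else 0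

namespace CxAux

noncomputable abbrev φ : PowerSeries ℚ →+* PowerSeries ℂ :=
  PowerSeries.map (algebraMap ℚ ℂ)

lemma phi_inj {A B : PowerSeries ℚ} (h : φ A = φ B) : A = B := by
  ext n
  have h2 := congrArg (PowerSeries.coeff n) h
  rw [PowerSeries.coeff_map, PowerSeries.coeff_map] at h2
  exact (algebraMap ℚ ℂ).injective h2

lemma ne_zero_of_const {R : Type*} [CommRing R] (F : PowerSeries R)
    (h : PowerSeries.constantCoeff F ≠ 0) : F ≠ 0 := by
  intro hF; apply h; rw [hF]; simp

lemma rescale_C' {A : Type*} [CommRing A] (a c : A) :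
    rescale a (PowerSeries.C c) = PowerSeries.C c := by
  ext n
  rw [coeff_rescale, PowerSeries.coeff_C]
  split <;> simp_all

lemma phi_rescale (a : ℚ) (F : PowerSeries ℚ) :
    φ (rescale a F) = rescale (algebraMap ℚ ℂ a) (φ F) := by
  ext n
  rw [PowerSeries.coeff_map, coeff_rescale, coeff_rescale, PowerSeries.coeff_map,
    map_mul, map_pow]

noncomputable abbrev ee : PowerSeries ℂ := rescale Complex.I (PowerSeries.exp ℂ)
noncomputable abbrev ff : PowerSeries ℂ := rescale (-Complex.I) (PowerSeries.exp ℂ)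
noncomputable abbrev ii : PowerSeries ℂ := PowerSeries.C Complex.I

lemma hii : ii * ii = -1 := by
  rw [← map_mul, Complex.I_mul_I, map_neg, map_one]

lemma hef : ee * ff = 1 := by
  rw [PowerSeries.exp_mul_exp_eq_exp_add, add_neg_cancel, rescale_zero]
  simp

lemma hee : ee * ee = rescale (2 * Complex.I) (PowerSeries.exp ℂ) := by
  rw [PowerSeries.exp_mul_exp_eq_exp_add]
  norm_num [two_mul]

lemma hff : ff * ff = rescale (-(2 * Complex.I)) (PowerSeries.exp ℂ) := by
  rw [PowerSeries.exp_mul_exp_eq_exp_add]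
  norm_num [two_mul]

lemma two_eq_C : (2 : PowerSeries ℂ) = PowerSeries.C 2 := by
  rw [map_ofNat]

lemma two_ii_eq_C : 2 * ii = PowerSeries.C (2 * Complex.I) := by
  rw [map_mul, two_eq_C]

lemma coeff_exp' (n : ℕ) (a : ℂ) :
    PowerSeries.coeff n (rescale a (PowerSeries.exp ℂ)) = a ^ n * (1 / n.factorial) := by
  rw [coeff_rescale, PowerSeries.coeff_exp]
  rw [eq_ratCast]
  push_cast
  ring

lemma hsin : 2 * ii * φ (PowerSeries.sin ℚ) = ee - ff := by
  rw [PowerSeries.map_sin]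
  ext n
  rw [map_sub, coeff_exp', coeff_exp', two_ii_eq_C, PowerSeries.coeff_C_mul]
  simp only [PowerSeries.sin, PowerSeries.coeff_mk, eq_ratCast]
  rcases Nat.even_or_odd n with he | ho
  · obtain ⟨m, rfl⟩ := he
    rw [if_pos ⟨m, rfl⟩]
    have h1 : Complex.I ^ (m + m) = (-1)^m := by
      rw [← two_mul, pow_mul, Complex.I_sq]
    have h2 : (-Complex.I) ^ (m + m) = (-1)^m := by
      rw [← two_mul, pow_mul, neg_pow, Complex.I_sq]
      norm_num
    rw [h1, h2]
    ring
  · obtain ⟨m, rfl⟩ := ho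
    rw [if_neg (by simp [Nat.even_add_one, parity_simps])]
    have hd : (2 * m + 1) / 2 = m := by omega
    rw [hd]
    have h1 : Complex.I ^ (2 * m + 1) = (-1)^m * Complex.I := by
      rw [pow_succ, pow_mul, Complex.I_sq]
    have h2 : (-Complex.I) ^ (2 * m + 1) = -((-1)^m * Complex.I) := by
      rw [pow_succ, pow_mul, neg_pow, Complex.I_sq, mul_pow]
      norm_num
    rw [h1, h2]
    push_cast
    ring

lemma hcos : 2 * φ (PowerSeries.cos ℚ) = ee + ff := by
  rw [PowerSeries.map_cos]
  ext n
  rw [map_add, coeff_exp', coeff_exp', two_eq_C, PowerSeries.coeff_C_mul]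
  simp only [PowerSeries.cos, PowerSeries.coeff_mk, eq_ratCast]
  rcases Nat.even_or_odd n with he | ho
  · obtain ⟨m, rfl⟩ := he
    rw [if_pos ⟨m, rfl⟩]
    have hd : (m + m) / 2 = m := by omega
    rw [hd]
    have h1 : Complex.I ^ (m + m) = (-1)^m := by
      rw [← two_mul, pow_mul, Complex.I_sq]
    have h2 : (-Complex.I) ^ (m + m) = (-1)^m := by
      rw [← two_mul, pow_mul, neg_pow, Complex.I_sq]
      norm_num
    rw [h1, h2]
    push_cast
    ring
  · obtain ⟨m, rfl⟩ := ho
    rw [if_neg (by simp [Nat.even_add_one, parity_simps])]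
    have h2 : (-Complex.I) ^ (2 * m + 1) = -(Complex.I ^ (2 * m + 1)) := by
      rw [neg_pow]
      have : (-1 : ℂ) ^ (2 * m + 1) = -1 := by
        rw [pow_succ, pow_mul]; norm_num
      rw [this]; ring
    rw [h2]
    push_cast
    ring

noncomputable abbrev B1 : PowerSeries ℂ := rescale Complex.I (bernoulliPowerSeries ℂ)
noncomputable abbrev B2 : PowerSeries ℂ := rescale (2 * Complex.I) (bernoulliPowerSeries ℂ)

lemma hB2 : B2 * (ee * ee - 1) = 2 * ii * PowerSeries.X := by
  have h := congrArg (rescale (2 * Complex.I)) (bernoulliPowerSeries_mul_exp_sub_one ℂ)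
  rw [map_mul, map_sub, map_one, rescale_X] at h
  rw [hee, h, two_ii_eq_C]

lemma hB1 : B1 * (ee - 1) = ii * PowerSeries.X := by
  have h := congrArg (rescale Complex.I) (bernoulliPowerSeries_mul_exp_sub_one ℂ)
  rw [map_mul, map_sub, map_one, rescale_X] at h
  rw [h]

lemma hB1sq : B1 * (ee * ee - 1) = ii * PowerSeries.X * (ee + 1) := by
  linear_combination (ee + 1) * hB1

lemma bern_odd_zero {m : ℕ} (hm : 1 ≤ m) : _root_.bernoulli (2 * m + 1) = 0 := by
  rw [bernoulli_eq_bernoulli'_of_ne_one (by omega)]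
  exact bernoulli'_eq_zero_of_odd ⟨m, by omega⟩ (by omega)

lemma coeff_B (n : ℕ) (a : ℂ) :
    PowerSeries.coeff n (rescale a (bernoulliPowerSeries ℂ)) =
      a ^ n * ((_root_.bernoulli n : ℂ) / n.factorial) := by
  rw [coeff_rescale, bernoulliPowerSeries, PowerSeries.coeff_mk]
  congr 1
  rw [eq_ratCast]
  push_cast
  ring

lemma hcot : φ cot1 = B2 + ii * PowerSeries.X := by
  ext n
  rw [PowerSeries.coeff_map, map_add, coeff_B, PowerSeries.coeff_C_mul, PowerSeries.coeff_X]
  simp only [cot1, PowerSeries.coeff_mk, eq_ratCast]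
  rcases Nat.even_or_odd n with he | ho
  · obtain ⟨m, rfl⟩ := he
    rw [if_pos ⟨m, rfl⟩, if_neg (by omega)]
    have hd : (m + m) / 2 = m := by omega
    have h1 : (2 * Complex.I) ^ (m + m) = (-4)^m := by
      rw [← two_mul, pow_mul, mul_pow, Complex.I_sq]
      norm_num
    rw [hd, h1]
    push_cast
    ring
  · obtain ⟨m, rfl⟩ := ho
    rw [if_neg (by simp [Nat.even_add_one, parity_simps])]
    rcases Nat.eq_zero_or_pos m with hm | hm
    · subst hm
      norm_num [_root_.bernoulli_one]
      ring
    · rw [if_neg (by omega), bern_odd_zero hm]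
      push_cast
      ring

lemma hcsc : φ csc1 = 2 * B1 - B2 := by
  ext n
  rw [PowerSeries.coeff_map, map_sub, coeff_B, two_eq_C, PowerSeries.coeff_C_mul, coeff_B]
  simp only [csc1, PowerSeries.coeff_mk, eq_ratCast]
  rcases Nat.even_or_odd n with he | ho
  · obtain ⟨m, rfl⟩ := he
    rw [if_pos ⟨m, rfl⟩]
    have hd : (m + m) / 2 = m := by omega
    have h1 : (2 * Complex.I) ^ (m + m) = (-4)^m := by
      rw [← two_mul, pow_mul, mul_pow, Complex.I_sq]
      norm_num
    have h2 : Complex.I ^ (m + m) = (-1)^m := by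
      rw [← two_mul, pow_mul, Complex.I_sq]
    rw [hd, h1, h2, show ((-4:ℂ))^m = (-1)^m * 4^m from by rw [neg_pow]]
    push_cast
    ring
  · obtain ⟨m, rfl⟩ := ho
    rw [if_neg (by simp [Nat.even_add_one, parity_simps])]
    rcases Nat.eq_zero_or_pos m with hm | hm
    · subst hm
      norm_num [_root_.bernoulli_one]
      ring
    · rw [bern_odd_zero hm]
      push_cast
      ring

end CxAux

namespace CxAux

lemma const_ee : PowerSeries.constantCoeff ee = 1 := by
  rw [← PowerSeries.coeff_zero_eq_constantCoeff_apply, coeff_exp']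
  simp

lemma hsinC : 2 * ii * PowerSeries.sin ℂ = ee - ff := by
  have h := hsin
  rwa [PowerSeries.map_sin] at h

lemma hcosC : 2 * PowerSeries.cos ℂ = ee + ff := by
  have h := hcos
  rwa [PowerSeries.map_cos] at h

lemma rescale_two_ee : rescale (2:ℂ) ee = ee * ee := by
  rw [rescale_rescale, hee, mul_comm]

lemma rescale_two_ff : rescale (2:ℂ) ff = ff * ff := by
  rw [rescale_rescale, hff]
  congr 1
  ring

lemma hres1 : 2 * ii * rescale (2:ℂ) (PowerSeries.sin ℂ) = ee * ee - ff * ff := by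
  have h := congrArg (rescale (2:ℂ)) hsinC
  rw [map_mul, map_mul, map_sub, rescale_two_ee, rescale_two_ff] at h
  rwa [two_eq_C, rescale_C', rescale_C', ← two_eq_C] at h

lemma hres2 : 2 * rescale (2:ℂ) (PowerSeries.cos ℂ) = ee * ee + ff * ff := by
  have h := congrArg (rescale (2:ℂ)) hcosC
  rw [map_mul, map_add, rescale_two_ee, rescale_two_ff] at h
  rwa [two_eq_C, rescale_C', ← two_eq_C] at h

lemma cancel_right {A B m : PowerSeries ℂ} (hm : PowerSeries.constantCoeff m ≠ 0)
    (h : A * m = B * m) : A = B :=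
  mul_right_cancel₀ (ne_zero_of_const m hm) h

lemma cscC_sin : (2 * B1 - B2) * PowerSeries.sin ℂ = PowerSeries.X := by
  apply cancel_right (m := 2 * ii * ee) (by simp [const_ee, Complex.I_ne_zero, map_ofNat])
  linear_combination (2*B1 - B2) * ee * hsinC + 2 * hB1sq - hB2 - (2*B1 - B2) * hef

lemma cotC_sin : (B2 + ii * PowerSeries.X) * PowerSeries.sin ℂ =
    PowerSeries.X * PowerSeries.cos ℂ := by
  apply cancel_right (m := 2 * ii * ee) (by simp [const_ee, Complex.I_ne_zero, map_ofNat])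
  linear_combination (B2 + ii * PowerSeries.X) * ee * hsinC - ii * PowerSeries.X * ee * hcosC
    + hB2 - (B2 + 2 * ii * PowerSeries.X) * hef

lemma doubleC_sin : rescale (2:ℂ) (PowerSeries.sin ℂ) =
    2 * (PowerSeries.sin ℂ * PowerSeries.cos ℂ) := by
  apply cancel_right (m := 4 * ii) (by simp [Complex.I_ne_zero, map_ofNat])
  linear_combination 2 * hres1 - 2 * (2 * ii * PowerSeries.sin ℂ) * hcosC
    - 2 * (ee + ff) * hsinC

lemma c2s2C : PowerSeries.cos ℂ * PowerSeries.cos ℂ - PowerSeries.sin ℂ * PowerSeries.sin ℂ =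
    rescale (2:ℂ) (PowerSeries.cos ℂ) := by
  have h4 : (PowerSeries.constantCoeff) (4 : PowerSeries ℂ) ≠ 0 := by simp [map_ofNat]
  apply mul_left_cancel₀ (ne_zero_of_const 4 h4)
  linear_combination (2 * PowerSeries.cos ℂ + ee + ff) * hcosC
    + (2 * ii * PowerSeries.sin ℂ + ee - ff) * hsinC
    - 4 * (PowerSeries.sin ℂ * PowerSeries.sin ℂ) * hii - 2 * hres2

end CxAux

end PSopen

open CxAux in
lemma csc1_sin : csc1 * PowerSeries.sin ℚ = PowerSeries.X := by
  apply phi_inj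
  rw [map_mul, hcsc, PowerSeries.map_sin, PowerSeries.map_X, cscC_sin]

open CxAux in
lemma cot1_sin : cot1 * PowerSeries.sin ℚ = PowerSeries.X * PowerSeries.cos ℚ := by
  apply phi_inj
  rw [map_mul, hcot, PowerSeries.map_sin, map_mul, PowerSeries.map_X, PowerSeries.map_cos,
    cotC_sin]

open CxAux in
lemma double_sin : PowerSeries.rescale (2:ℚ) (PowerSeries.sin ℚ) =
    2 * (PowerSeries.sin ℚ * PowerSeries.cos ℚ) := by
  apply phi_inj
  rw [phi_rescale, map_mul, map_mul, PowerSeries.map_sin, PowerSeries.map_cos, map_ofNat,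
    map_ofNat, doubleC_sin]

open CxAux in
lemma c2s2 : PowerSeries.cos ℚ * PowerSeries.cos ℚ - PowerSeries.sin ℚ * PowerSeries.sin ℚ =
    PowerSeries.rescale (2:ℚ) (PowerSeries.cos ℚ) := by
  apply phi_inj
  rw [phi_rescale, map_sub, map_mul, map_mul, PowerSeries.map_sin, PowerSeries.map_cos,
    map_ofNat, c2s2C]

lemma pyth : PowerSeries.sin ℚ * PowerSeries.sin ℚ + PowerSeries.cos ℚ * PowerSeries.cos ℚ
    = 1 := by
  have h := ode_zero (PowerSeries.sin ℚ * PowerSeries.sin ℚ +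
      PowerSeries.cos ℚ * PowerSeries.cos ℚ - 1) 0 ?_ ?_
  · linear_combination h
  · rw [map_sub, map_add, Derivation.leibniz, Derivation.leibniz, sin_deriv, cos_deriv,
      Derivation.map_one_eq_zero]
    simp only [smul_eq_mul]
    ring
  · rw [map_sub, map_add, map_mul, map_mul, sin_const, cos_const, map_one]
    ring

lemma one_sub_r2cos : 1 - PowerSeries.rescale (2:ℚ) (PowerSeries.cos ℚ) =
    2 * (PowerSeries.sin ℚ * PowerSeries.sin ℚ) := by
  linear_combination c2s2 - pyth

lemma Tcos : Ts * PowerSeries.cos ℚ = PowerSeries.sin ℚ := by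
  have h := ode_zero (Ts * PowerSeries.cos ℚ - PowerSeries.sin ℚ) Ts ?_ ?_
  · linear_combination h
  · rw [map_sub, Derivation.leibniz, sin_deriv, cos_deriv, Ts_ode]
    simp only [smul_eq_mul]
    ring
  · rw [map_sub, map_mul, Ts_const, cos_const, sin_const]
    ring

lemma Gcs : Gs * (PowerSeries.cos ℚ - PowerSeries.sin ℚ) =
    PowerSeries.cos ℚ + PowerSeries.sin ℚ := by
  have h := ode_zero (Gs * (PowerSeries.cos ℚ - PowerSeries.sin ℚ) -
      (PowerSeries.cos ℚ + PowerSeries.sin ℚ)) Gs ?_ ?_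
  · linear_combination h
  · rw [map_sub, Derivation.leibniz, map_sub, map_add, sin_deriv, cos_deriv, Gs_ode]
    simp only [smul_eq_mul]
    ring
  · rw [map_sub, map_mul, map_sub, map_add, Gs_const, cos_const, sin_const]
    ring

lemma Scs : Ss * (PowerSeries.cos ℚ - PowerSeries.sin ℚ) = 1 := by
  have h := ode_zero (Ss * (PowerSeries.cos ℚ - PowerSeries.sin ℚ) - 1) 0 ?_ ?_
  · linear_combination h
  · rw [map_sub, Derivation.leibniz, map_sub, sin_deriv, cos_deriv,
      Derivation.map_one_eq_zero, Ss_ode]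
    simp only [smul_eq_mul]
    linear_combination Ss * Gcs
  · rw [map_sub, map_mul, map_sub, Ss_const, cos_const, sin_const, map_one]
    ring

lemma rneg_cos : PowerSeries.rescale (-1:ℚ) (PowerSeries.cos ℚ) = PowerSeries.cos ℚ := by
  ext n
  rw [PowerSeries.coeff_rescale]
  simp only [PowerSeries.cos, PowerSeries.coeff_mk]
  rcases Nat.even_or_odd n with he | ho
  · rw [he.neg_one_pow, one_mul]
  · rw [if_neg (Nat.not_even_iff_odd.mpr ho), mul_zero]

lemma rneg_sin : PowerSeries.rescale (-1:ℚ) (PowerSeries.sin ℚ) = -PowerSeries.sin ℚ := by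
  ext n
  rw [PowerSeries.coeff_rescale, map_neg]
  simp only [PowerSeries.sin, PowerSeries.coeff_mk]
  rcases Nat.even_or_odd n with he | ho
  · rw [if_pos he, mul_zero, neg_zero]
  · rw [ho.neg_one_pow]
    ring

lemma Scs_neg : PowerSeries.rescale (-1:ℚ) Ss *
    (PowerSeries.cos ℚ + PowerSeries.sin ℚ) = 1 := by
  have h := congrArg (PowerSeries.rescale (-1:ℚ)) Scs
  rw [map_mul, map_sub, map_one, rneg_cos, rneg_sin] at h
  rw [← h]
  ring

lemma Sev : (Ss + PowerSeries.rescale (-1:ℚ) Ss) * PowerSeries.rescale (2:ℚ)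
    (PowerSeries.cos ℚ) = 2 * PowerSeries.cos ℚ := by
  rw [← c2s2]
  linear_combination (PowerSeries.cos ℚ + PowerSeries.sin ℚ) * Scs +
    (PowerSeries.cos ℚ - PowerSeries.sin ℚ) * Scs_neg

lemma rs2_Tcos : PowerSeries.rescale (2:ℚ) Ts * PowerSeries.rescale (2:ℚ) (PowerSeries.cos ℚ)
    = PowerSeries.rescale (2:ℚ) (PowerSeries.sin ℚ) := by
  rw [← map_mul, Tcos]

lemma sin_ne_zero : PowerSeries.sin ℚ ≠ 0 := by
  intro h
  have h2 := congrArg (PowerSeries.coeff 1) h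
  simp [PowerSeries.sin] at h2

lemma MAIN : 2 * (PowerSeries.X * PowerSeries.rescale (2:ℚ) Ts) =
    (Ss + PowerSeries.rescale (-1:ℚ) Ss) * csc1 - 2 * cot1 := by
  have h2c : PowerSeries.rescale (2:ℚ) (PowerSeries.cos ℚ) ≠ 0 := by
    apply CxAux.ne_zero_of_const
    rw [← PowerSeries.coeff_zero_eq_constantCoeff_apply, PowerSeries.coeff_rescale]
    simp [PowerSeries.cos]
  apply mul_right_cancel₀ (mul_ne_zero sin_ne_zero h2c)
  linear_combination (2 * PowerSeries.X * PowerSeries.sin ℚ) * rs2_Tcos +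
    (2 * PowerSeries.X * PowerSeries.sin ℚ) * double_sin -
    ((Ss + PowerSeries.rescale (-1:ℚ) Ss) * PowerSeries.rescale (2:ℚ) (PowerSeries.cos ℚ)) *
      csc1_sin -
    PowerSeries.X * Sev +
    2 * (PowerSeries.rescale (2:ℚ) (PowerSeries.cos ℚ)) * cot1_sin -
    2 * PowerSeries.X * PowerSeries.cos ℚ * one_sub_r2cos
lemma sum_even_odd (m : ℕ) (g : ℕ → ℚ) :
    ∑ k ∈ range (2*m+1), g k =
      (∑ u ∈ range (m+1), g (2*u)) + ∑ u ∈ range m, g (2*u+1) := by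
  induction m with
  | zero => simp
  | succ m ih =>
    rw [show 2*(m+1)+1 = (2*m+1)+1+1 by ring, Finset.sum_range_succ, Finset.sum_range_succ,
      ih, Finset.sum_range_succ (fun u => g (2*u)) (m+1),
      Finset.sum_range_succ (fun u => g (2*u+1)) m,
      show 2*(m+1) = 2*m+1+1 by ring]
    ring

lemma fact_ne (m : ℕ) : ((m.factorial : ℚ)) ≠ 0 := by
  exact_mod_cast m.factorial_ne_zero

lemma hcoeffL (n : ℕ) :
    PowerSeries.coeff (2*n+2) (2 * (PowerSeries.X * PowerSeries.rescale (2:ℚ) Ts)) =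
      2 * (2^(2*n+1) * (tg (2*n+1) / (2*n+1).factorial)) := by
  rw [show (2 : PowerSeries ℚ) = PowerSeries.C 2 by rw [map_ofNat],
    PowerSeries.coeff_C_mul, show 2*n+2 = (2*n+1)+1 by ring, PowerSeries.coeff_succ_X_mul,
    PowerSeries.coeff_rescale]
  simp only [Ts, PowerSeries.coeff_mk]

lemma coeff_S2_even (n u : ℕ) :
    PowerSeries.coeff (2*u) (Ss + PowerSeries.rescale (-1:ℚ) Ss) =
      2 * (s (2*u) / (2*u).factorial) := by
  rw [map_add, PowerSeries.coeff_rescale]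
  simp only [Ss, PowerSeries.coeff_mk]
  rw [Even.neg_one_pow ⟨u, by ring⟩]
  ring

lemma coeff_S2_odd (n u : ℕ) :
    PowerSeries.coeff (2*u+1) (Ss + PowerSeries.rescale (-1:ℚ) Ss) = 0 := by
  rw [map_add, PowerSeries.coeff_rescale]
  simp only [Ss, PowerSeries.coeff_mk]
  rw [Odd.neg_one_pow ⟨u, by ring⟩]
  ring

lemma hcoeffR (n : ℕ) :
    PowerSeries.coeff (2*n+2)
        ((Ss + PowerSeries.rescale (-1:ℚ) Ss) * csc1 - 2 * cot1) =
      ((∑ u ∈ range (n+1), 2 * (s (2*u) / (2*u).factorial) *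
          ((-1)^((n-u)+2) * (4^((n-u)+1) - 2) * _root_.bernoulli (2*n+2-2*u) /
            (2*n+2-2*u).factorial))
        + 2 * (s (2*n+2) / (2*n+2).factorial))
      - 2 * ((-4)^(n+1) * _root_.bernoulli (2*n+2) / (2*n+2).factorial) := by
  rw [map_sub]
  congr 1
  · -- product term
    rw [PowerSeries.coeff_mul, Finset.Nat.sum_antidiagonal_eq_sum_range_succ_mk,
      show (2*n+2).succ = 2*(n+1)+1 by omega, sum_even_odd]
    have hodd : ∑ u ∈ range (n+1),
        (PowerSeries.coeff (2*u+1) (Ss + PowerSeries.rescale (-1:ℚ) Ss)) *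
          (PowerSeries.coeff (2*n+2 - (2*u+1)) csc1) = 0 := by
      refine Finset.sum_eq_zero fun u hu => ?_
      rw [coeff_S2_odd n u, zero_mul]
    rw [hodd, add_zero, Finset.sum_range_succ]
    congr 1
    · refine Finset.sum_congr rfl fun u hu => ?_
      have hun : u ≤ n := Nat.le_of_lt_succ (Finset.mem_range.mp hu)
      rw [coeff_S2_even n u]
      simp only [csc1, PowerSeries.coeff_mk]
      have he : Even (2*n+2 - 2*u) := ⟨n+1-u, by omega⟩
      simp only [he, if_true]
      rw [show (2*n+2-2*u)/2 = (n-u)+1 by omega, show (n-u)+1+1 = (n-u)+2 by ring]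
    · rw [coeff_S2_even n (n+1)]
      simp only [csc1, PowerSeries.coeff_mk]
      rw [show 2*n+2 - 2*(n+1) = 0 by omega]
      norm_num [_root_.bernoulli_zero]
      ring
  · rw [show (2 : PowerSeries ℚ) = PowerSeries.C 2 by rw [map_ofNat],
      PowerSeries.coeff_C_mul]
    simp only [cot1, PowerSeries.coeff_mk]
    have he : Even (2*n+2) := ⟨n+1, by ring⟩
    simp only [he, if_true]
    rw [show (2*n+2)/2 = n+1 by omega]

theorem tangent_eq_sum_springer_bernoulli (n : ℕ) :
    (2 * n + 2 : ℚ) * 2 ^ (2 * n + 1) * E (2 * n + 1) =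
      s (2 * n + 2) +
        (∑ i ∈ Finset.range (n + 1),
          ((2 * n + 2).choose (2 * i + 2) : ℚ) * (-1) ^ (i + 2) * (4 ^ (i + 1) - 2) *
            _root_.bernoulli (2 * i + 2) * s (2 * n - 2 * i)) -
        (-4) ^ (n + 1) * _root_.bernoulli (2 * n + 2) := by
  have hc := congrArg (PowerSeries.coeff (2*n+2)) MAIN
  rw [hcoeffL n, hcoeffR n] at hc
  have hE : E (2*n+1) = tg (2*n+1) := by
    unfold E tg
    rw [if_neg (by simp [Nat.even_add_one, parity_simps])]
  rw [hE]
  have hF : ((2*n+2).factorial : ℚ) = (2*n+2) * (2*n+1).factorial := by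
    rw [show 2*n+2 = (2*n+1)+1 by ring, Nat.factorial_succ]
    push_cast
    ring
  have hL : ((2*n+2).factorial:ℚ)/2 * (2 * (2^(2*n+1) * (tg (2*n+1)/(2*n+1).factorial)))
      = (2*n+2:ℚ) * 2^(2*n+1) * tg (2*n+1) := by
    rw [hF]
    have := fact_ne (2*n+1)
    field_simp
  have hsum : ((2*n+2).factorial:ℚ)/2 * (∑ u ∈ range (n+1),
        2 * (s (2*u) / (2*u).factorial) *
          ((-1)^((n-u)+2) * (4^((n-u)+1) - 2) * _root_.bernoulli (2*n+2-2*u) /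
            (2*n+2-2*u).factorial))
      = ∑ i ∈ Finset.range (n + 1),
          ((2 * n + 2).choose (2 * i + 2) : ℚ) * (-1) ^ (i + 2) * (4 ^ (i + 1) - 2) *
            _root_.bernoulli (2 * i + 2) * s (2 * n - 2 * i) := by
    rw [Finset.mul_sum, ← Finset.sum_range_reflect (fun i =>
      ((2 * n + 2).choose (2 * i + 2) : ℚ) * (-1) ^ (i + 2) * (4 ^ (i + 1) - 2) *
        _root_.bernoulli (2 * i + 2) * s (2 * n - 2 * i)) (n+1)]
    refine Finset.sum_congr rfl fun u hu => ?_
    have hun : u ≤ n := Nat.le_of_lt_succ (Finset.mem_range.mp hu)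
    simp only [Nat.add_sub_cancel]
    rw [show 2 * n - 2 * (n - u) = 2*u by omega,
      show 2 * (n - u) + 2 = 2*n+2-2*u by omega,
      Nat.cast_choose ℚ (show 2*n+2-2*u ≤ 2*n+2 by omega),
      show (2*n+2) - (2*n+2-2*u) = 2*u by omega]
    have h1 := fact_ne (2*u)
    have h2 := fact_ne (2*n+2-2*u)
    have h3 := fact_ne (2*n+2)
    field_simp
  calc (2*n+2:ℚ) * 2^(2*n+1) * tg (2*n+1)
      = ((2*n+2).factorial:ℚ)/2 *
          (2 * (2^(2*n+1) * (tg (2*n+1)/(2*n+1).factorial))) := hL.symm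
    _ = ((2*n+2).factorial:ℚ)/2 * (((∑ u ∈ range (n+1),
            2 * (s (2*u) / (2*u).factorial) *
              ((-1)^((n-u)+2) * (4^((n-u)+1) - 2) * _root_.bernoulli (2*n+2-2*u) /
                (2*n+2-2*u).factorial))
            + 2 * (s (2*n+2) / (2*n+2).factorial))
          - 2 * ((-4)^(n+1) * _root_.bernoulli (2*n+2) / (2*n+2).factorial)) := by
        rw [hc]
    _ = _ := by
        rw [mul_sub, mul_add, hsum]
        have h3 := fact_ne (2*n+2)
        have e1 : ((2*n+2).factorial:ℚ)/2 * (2 * (s (2*n+2) / (2*n+2).factorial))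
            = s (2*n+2) := by
          field_simp
        have e2 : ((2*n+2).factorial:ℚ)/2 *
            (2 * ((-4)^(n+1) * _root_.bernoulli (2*n+2) / (2*n+2).factorial))
            = (-4)^(n+1) * _root_.bernoulli (2*n+2) := by
          field_simp
        rw [e1, e2]
        ring
end
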